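/- arXiv:2208.09882 — 4 statements merged into one kernel-verified Lean document; each statement's English description precedes it below -/
import Mathlib

section
/- Let μ ≥ 1, ℓ ≥ 0, m ≥ 0 be integers with gcd(2ℓ+1, 2m+1) = 1, set M = 2ℓ + 4m + 3 and σ = 2·(2m+1)²·k. Then for every pair (κ, λ) ∈ {(0,1), (1,0)} and every integer k with gcd(k, M) = 1, one has H_M( q^σ · f((−1)^κ q^{(2m+1)k}, (−1)^κ q^{μM−(2m+1)k})^{2ℓ+1} · f((−1)^λ q^{(2ℓ+1)k}, (−1)^λ q^{2μM−(2ℓ+1)k})^{2m+1} ) = 0. -/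
/-!
Common setup: Ramanujan theta series as formal Laurent series over `ℚ`
(`LaurentSeries ℚ = HahnSeries ℤ ℚ`), and the huffing operator `H_M`.
-/

noncomputable section

open scoped Classical

namespace ThetaVanish

/-- A subset of `ℤ` that is bounded below is partially well-ordered. -/
theorem isPWO_of_subset_Ici {a : ℤ} {s : Set ℤ} (h : s ⊆ Set.Ici a) : s.IsPWO := by
  have hWF : s.IsWF := by
    rw [Set.isWF_iff_no_descending_seq]
    intro f hf hmem
    have key : ∀ n : ℕ, f n + n ≤ f 0 := by
      intro n
      induction n with
      | zero => simp
      | succ k ih =>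
        have h2 : f (k + 1) < f k := hf (Nat.lt_succ_self k)
        push_cast
        push_cast at ih
        omega
    have h1 := key (f 0 - a + 1).toNat
    have h2 : a ≤ f ((f 0 - a + 1).toNat) := h (hmem _)
    have h3 : a ≤ f 0 := h (hmem 0)
    omega
  exact hWF.isPWO

/-- The coefficient of `q^N` in Ramanujan's theta series `f(ε q^r, ε q^s)`:
the (finite, when `r + s > 0`) sum of `ε^n` over all integers `n` with
`r·n(n+1)/2 + s·n(n-1)/2 = N`. -/
def thetaCoeff (ε r s : ℤ) : ℤ → ℚ := fun N =>
  ∑ᶠ n : ℤ, if r * (n * (n + 1) / 2) + s * (n * (n - 1) / 2) = N then (ε : ℚ) ^ n else 0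

theorem thetaCoeff_support (ε r s : ℤ) (h : 0 < r + s) :
    Function.support (thetaCoeff ε r s) ⊆ Set.Ici (-(r - s) ^ 2) := by
  intro N hN
  simp only [Function.mem_support, ne_eq] at hN
  rw [Set.mem_Ici]
  by_contra hcon
  push_neg at hcon
  apply hN
  apply finsum_eq_zero_of_forall_eq_zero
  intro n
  rw [if_neg]
  intro hQ
  obtain ⟨c, hc⟩ := Int.even_mul_succ_self n
  obtain ⟨e, he⟩ := Int.even_mul_pred_self n
  have hc' : n * (n + 1) = 2 * c := by omega
  have he' : n * (n - 1) = 2 * e := by omega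
  have e1 : n * (n + 1) / 2 = c := by omega
  have e2 : n * (n - 1) / 2 = e := by omega
  rw [e1, e2] at hQ
  have key : 2 * N = (r + s) * n ^ 2 + (r - s) * n := by
    linear_combination -2 * hQ - r * hc' - s * he'
  nlinarith [sq_nonneg (2 * n + r - s), sq_nonneg (r - s),
    mul_nonneg (show (0:ℤ) ≤ r + s - 1 by omega) (sq_nonneg n)]

/-- Ramanujan's theta series `f(ε q^r, ε q^s)` (for a sign `ε ∈ {1, -1}` and
`r + s > 0`), as a formal Laurent series over `ℚ`; junk value `0` if `r + s ≤ 0`. -/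
def theta (ε r s : ℤ) : LaurentSeries ℚ :=
  if h : 0 < r + s then
    { coeff := thetaCoeff ε r s
      isPWO_support' := isPWO_of_subset_Ici (thetaCoeff_support ε r s h) }
  else 0

/-- The huffing operator `H_M`: keep only the coefficients whose index is a
multiple of `M`. -/
def huff (M : ℤ) (G : LaurentSeries ℚ) : LaurentSeries ℚ where
  coeff N := if M ∣ N then G.coeff N else 0
  isPWO_support' := by
    apply Set.IsPWO.mono G.isPWO_support
    intro N hN
    simp only [Function.mem_support, ne_eq] at hN
    rw [HahnSeries.mem_support]
    by_cases hd : M ∣ N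
    · rwa [if_pos hd] at hN
    · exact absurd (if_neg hd) hN


/-! ### Arithmetic helpers -/

/-- `n(n-1)/2`. -/
def Quad (n : ℤ) : ℤ := n * (n - 1) / 2

/-- The exponent of the `n`-th term of `f(ε q^r, ε q^s)`. -/
def Ee (r s n : ℤ) : ℤ := r * (n * (n + 1) / 2) + s * (n * (n - 1) / 2)

lemma two_quad (n : ℤ) : 2 * Quad n = n * (n - 1) := by
  obtain ⟨c, hc⟩ := Int.even_mul_pred_self n
  rw [Quad, hc]; omega

lemma quad_cancel {x y : ℤ} (h : 2 * x = 2 * y) : x = y := by omega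

lemma Ee_eq (r s n : ℤ) : Ee r s n = (r + s) * Quad n + r * n := by
  obtain ⟨c, hc⟩ := Int.even_mul_pred_self n
  have h1 : n * (n + 1) = c + c + 2 * n := by linear_combination hc
  have h2 : (c + c + 2 * n) / 2 = c + n := by omega
  have h3 : (c + c) / 2 = c := by omega
  rw [Ee, Quad, hc, h1, h2, h3]; ring

lemma quad_add (n t : ℤ) : Quad (n + t) = Quad n + t * n + Quad t := by
  apply quad_cancel
  have h := two_quad (n + t)
  have h1 := two_quad n
  have h2 := two_quad t
  rw [h]
  linear_combination -h1 - h2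

lemma quad_add_quad_neg (t : ℤ) : Quad t + Quad (-t) = t ^ 2 := by
  apply quad_cancel
  have h1 := two_quad t
  have h2 := two_quad (-t)
  linear_combination h1 + h2

lemma quad_odd (v : ℤ) : Quad (2 * v - 1) = (2 * v - 1) * (v - 1) := by
  apply quad_cancel
  have h1 := two_quad (2 * v - 1)
  linear_combination h1

lemma quad_neg_odd (v : ℤ) : Quad (-(2 * v - 1)) = (2 * v - 1) * v := by
  apply quad_cancel
  have h1 := two_quad (-(2 * v - 1))
  linear_combination h1

lemma Ee_add (r s n t : ℤ) :
    Ee r s (n + t) = Ee r s n + (r + s) * (t * n) + (r + s) * Quad t + r * t := by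
  rw [Ee_eq, Ee_eq, quad_add]; ring

lemma Ee_sq (r s n : ℤ) :
    (2 * (r + s) * n + (r - s)) ^ 2 = 8 * (r + s) * Ee r s n + (r - s) ^ 2 := by
  rw [Ee_eq]
  have h1 := two_quad n
  linear_combination (-4 * (r + s) ^ 2) * h1

lemma Ee_lb {r s : ℤ} (h : 0 < r + s) (n : ℤ) : -(r - s) ^ 2 ≤ Ee r s n := by
  have h0 := Ee_sq r s n
  nlinarith [sq_nonneg (2 * (r + s) * n + (r - s)), sq_nonneg (r - s)]

lemma sq_le_box {A c K x : ℤ} (hA : 1 ≤ A) (h : (A * x + c) ^ 2 ≤ K) :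
    -(K + |c| + 1) ≤ x ∧ x ≤ K + |c| + 1 := by
  set X := A * x + c with hX
  have hK0 : 0 ≤ K := le_trans (sq_nonneg X) h
  have habs1 := le_abs_self c
  have habs2 := neg_abs_le c
  have habs0 := abs_nonneg c
  have hXK : X ≤ K := by
    rcases le_or_gt X 0 with h' | h'
    · exact h'.trans hK0
    · nlinarith
  have hKX : -K ≤ X := by
    rcases le_or_gt 0 X with h' | h'
    · linarith
    · nlinarith
  constructor
  · rcases le_or_gt 0 x with hx | hx
    · linarith
    · have h1 : -K - |c| ≤ A * x := by linarith
      have h2 : A * x ≤ x := by nlinarith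
      linarith
  · rcases le_or_gt x 0 with hx | hx
    · linarith
    · have h1 : A * x ≤ K + |c| := by linarith
      have h2 : x ≤ A * x := by nlinarith
      linarith

lemma finite_Ee_le {r s : ℤ} (h : 0 < r + s) (C : ℤ) :
    {n : ℤ | Ee r s n ≤ C}.Finite := by
  set B := 8 * (r + s) * C + (r - s) ^ 2 + |r - s| + 1 with hB
  apply Set.Finite.subset (Set.finite_Icc (-B) B)
  intro n hn
  simp only [Set.mem_setOf_eq] at hn
  have h1 : (2 * (r + s) * n + (r - s)) ^ 2 ≤ 8 * (r + s) * C + (r - s) ^ 2 := by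
    have := Ee_sq r s n
    nlinarith
  have h2 : (1 : ℤ) ≤ 2 * (r + s) := by omega
  obtain ⟨hl, hr⟩ := sq_le_box h2 h1
  simp only [Set.mem_Icc]
  omega

lemma finite_Ee_eq {r s : ℤ} (h : 0 < r + s) (C : ℤ) :
    {n : ℤ | Ee r s n = C}.Finite :=
  (finite_Ee_le h C).subset fun n hn => le_of_eq hn

/-! ### Theta series as a summable family of monomials -/

open HahnSeries

/-- The family of monomials of a theta series. -/
def thetaFam (ε r s : ℤ) (h : 0 < r + s) : SummableFamily ℤ ℚ ℤ where
  toFun n := HahnSeries.single (Ee r s n) ((ε : ℚ) ^ n)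
  isPWO_iUnion_support' := by
    apply isPWO_of_subset_Ici (a := -(r - s) ^ 2)
    intro N hN
    simp only [Set.mem_iUnion] at hN
    obtain ⟨n, hn⟩ := hN
    have h2 : N = Ee r s n := HahnSeries.support_single_subset hn
    rw [Set.mem_Ici, h2]
    exact Ee_lb h n
  finite_co_support' g := by
    apply Set.Finite.subset (finite_Ee_le h g)
    intro n hn
    simp only [Set.mem_setOf_eq] at hn ⊢
    by_contra hcon
    apply hn
    rw [HahnSeries.coeff_single, if_neg]
    intro h2
    exact hcon ((le_of_eq h2.symm))

lemma theta_hsum {ε r s : ℤ} (h : 0 < r + s) :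
    theta ε r s = (thetaFam ε r s h).hsum := by
  ext N
  rw [theta, dif_pos h]
  show thetaCoeff ε r s N = _
  rw [SummableFamily.coeff_hsum, thetaCoeff]
  apply finsum_congr
  intro n
  show _ = (HahnSeries.single (Ee r s n) ((ε : ℚ) ^ n)).coeff N
  rw [HahnSeries.coeff_single, Ee]
  by_cases hc : r * (n * (n + 1) / 2) + s * (n * (n - 1) / 2) = N
  · rw [if_pos hc, if_pos hc.symm]
  · rw [if_neg hc, if_neg fun hh => hc hh.symm]

/-- Multiplying by a theta series, at the level of coefficients. -/
lemma mul_theta_coeff (F : LaurentSeries ℚ) {ε r s : ℤ} (h : 0 < r + s) (N : ℤ) :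
    (F * theta ε r s).coeff N = ∑ᶠ n : ℤ, F.coeff (N - Ee r s n) * (ε : ℚ) ^ n := by
  rw [theta_hsum h, ← SummableFamily.hsum_smul, SummableFamily.coeff_hsum]
  apply finsum_congr
  intro n
  rw [SummableFamily.smul_apply, HahnSeries.of_symm_smul_of_eq_mul]
  show (F * HahnSeries.single (Ee r s n) ((ε : ℚ) ^ n)).coeff N = _
  have h2 := HahnSeries.coeff_mul_single_add (r := ((ε : ℚ) ^ n)) (x := F)
    (a := N - Ee r s n) (b := Ee r s n)
  rw [sub_add_cancel] at h2
  exact h2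

/-- Coefficient of a product, as a `finsum`. -/
lemma mul_coeff_finsum (F G : LaurentSeries ℚ) (N : ℤ) :
    (F * G).coeff N = ∑ᶠ j : ℤ, F.coeff j * G.coeff (N - j) := by
  rw [HahnSeries.coeff_mul]
  rw [finsum_eq_finset_sum_of_support_subset _
    (s := (Finset.addAntidiagonal F.isPWO_support G.isPWO_support N).image Prod.fst)]
  · rw [Finset.sum_image]
    · apply Finset.sum_congr rfl
      intro ij hij
      rw [Finset.mem_addAntidiagonal] at hij
      have : N - ij.1 = ij.2 := by omega
      rw [this]
    · intro x hx y hy hxy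
      replace hx := Finset.mem_addAntidiagonal.mp hx; replace hy := Finset.mem_addAntidiagonal.mp hy
      have h1 : x.1 + x.2 = N := hx.2.2
      have h2 : y.1 + y.2 = N := hy.2.2
      have : x.2 = y.2 := by omega
      exact Prod.ext hxy this
  · intro j hj
    simp only [Function.mem_support, ne_eq] at hj
    have hF : F.coeff j ≠ 0 := fun h0 => hj (by rw [h0, zero_mul])
    have hG : G.coeff (N - j) ≠ 0 := fun h0 => hj (by rw [h0, mul_zero])
    simp only [Finset.coe_image, Set.mem_image, Finset.mem_coe,
      Finset.mem_addAntidiagonal]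
    exact ⟨(j, N - j), Finset.mem_addAntidiagonal.mpr ⟨hF, hG, by ring⟩, rfl⟩

/-! ### Weighted counts of multi-indices -/

/-- `dd r s e N S` is the number of `e`-tuples `(n₁,…,n_e)` of integers with
`∑ Ee r s nᵢ = N` and `∑ nᵢ = S`. -/
def dd (r s : ℤ) : ℕ → ℤ → ℤ → ℚ
  | 0 => fun N S => if N = 0 ∧ S = 0 then 1 else 0
  | e + 1 => fun N S => ∑ᶠ n : ℤ, dd r s e (N - Ee r s n) (S - n)

lemma finsum_exists_ne_zero {α : Type*} {f : α → ℚ} (h : (∑ᶠ a, f a) ≠ 0) :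
    ∃ a, f a ≠ 0 := by
  by_contra hc
  push_neg at hc
  exact h (finsum_eq_zero_of_forall_eq_zero hc)

lemma dd_zero_ne {r s : ℤ} {N S : ℤ} (h : dd r s 0 N S ≠ 0) : N = 0 ∧ S = 0 := by
  by_contra hc
  simp only [dd, if_neg hc, ne_eq, not_true_eq_false] at h

lemma dd_succ_ne {r s : ℤ} {e : ℕ} {N S : ℤ} (h : dd r s (e + 1) N S ≠ 0) :
    ∃ n : ℤ, dd r s e (N - Ee r s n) (S - n) ≠ 0 := by
  simp only [dd] at h
  exact finsum_exists_ne_zero h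

lemma dd_lb {r s : ℤ} (hL : 0 < r + s) (e : ℕ) {N S : ℤ} (h : dd r s e N S ≠ 0) :
    -(e : ℤ) * (r - s) ^ 2 ≤ N := by
  induction e generalizing N S with
  | zero =>
    obtain ⟨h1, _⟩ := dd_zero_ne h
    simp [h1]
  | succ e ih =>
    obtain ⟨n, hn⟩ := dd_succ_ne h
    have h1 := ih hn
    have h2 := Ee_lb hL n
    have h3 : (0:ℤ) ≤ (r - s)^2 := sq_nonneg _
    push_cast
    linarith

lemma dd_cs {r s : ℤ} (hL : 0 < r + s) (e : ℕ) {N S : ℤ} (h : dd r s e N S ≠ 0) :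
    (2 * (r + s) * S + (e : ℤ) * (r - s)) ^ 2
      ≤ (e : ℤ) * (8 * (r + s) * N + (e : ℤ) * (r - s) ^ 2) := by
  induction e generalizing N S with
  | zero =>
    obtain ⟨h1, h2⟩ := dd_zero_ne h
    simp [h1, h2]
  | succ e ih =>
    obtain ⟨n, hn⟩ := dd_succ_ne h
    have hU := ih hn
    have hx := Ee_sq r s n
    rcases Nat.eq_zero_or_pos e with he | he
    · subst he
      have hc := dd_zero_ne hn
      have h1 : N = Ee r s n := by omega
      have h2 : S = n := by omega
      subst h1; subst h2
      push_cast
      linarith [hx]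
    · have hcast : (1:ℤ) ≤ (e:ℤ) := by exact_mod_cast he
      push_cast at hU ⊢
      set E := (e:ℤ) with hE
      set L := r + s with hLdef
      set d := r - s with hd
      have hA : 0 ≤ E*(8*L*(N - Ee r s n) + E*d^2) - (2*L*(S-n) + E*d)^2 := by linarith
      have h3 : 8*L*(Ee r s n) + d^2 - (2*L*n+d)^2 = 0 := by linarith [hx]
      have key : E * ((E+1)*(8*L*N + (E+1)*d^2) - (2*L*S + (E+1)*d)^2)
          = (E+1)*(E*(8*L*(N - Ee r s n) + E*d^2) - (2*L*(S-n) + E*d)^2)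
            + ((2*L*(S-n) + E*d) - E*(2*L*n + d))^2
            + E*(E+1)*(8*L*(Ee r s n) + d^2 - (2*L*n+d)^2) := by ring
      have hE0 : (0:ℤ) < E := by linarith
      have hED : 0 ≤ E * ((E+1)*(8*L*N + (E+1)*d^2) - (2*L*S + (E+1)*d)^2) := by
        rw [key, h3, mul_zero, add_zero]
        have h4 : 0 ≤ (E+1) * (E*(8*L*(N - Ee r s n) + E*d^2) - (2*L*(S-n) + E*d)^2) :=
          mul_nonneg (by linarith) hA
        have h5 : 0 ≤ ((2*L*(S-n) + E*d) - E*(2*L*n + d))^2 := sq_nonneg _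
        linarith
      have hfin : 0 ≤ (E+1)*(8*L*N + (E+1)*d^2) - (2*L*S + (E+1)*d)^2 := by
        nlinarith [hED, hE0]
      linarith

lemma dd_suppS_finite {r s : ℤ} (hL : 0 < r + s) (e : ℕ) (N : ℤ) :
    {S : ℤ | dd r s e N S ≠ 0}.Finite := by
  set K := (e:ℤ) * (8*(r+s)*N + (e:ℤ)*(r-s)^2) + |(e:ℤ)*(r-s)| + 1 with hK
  apply Set.Finite.subset (Set.finite_Icc (-K) K)
  intro S hS
  simp only [Set.mem_setOf_eq] at hS
  have h1 := dd_cs hL e hS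
  have h2 : (1:ℤ) ≤ 2 * (r + s) := by omega
  obtain ⟨hl, hr⟩ := sq_le_box h2 h1
  simp only [Set.mem_Icc]
  omega

lemma dd_dvd {r s M' : ℤ} (hdvd : M' ∣ (r + s)) (e : ℕ) {N S : ℤ}
    (h : dd r s e N S ≠ 0) : M' ∣ (N - r * S) := by
  induction e generalizing N S with
  | zero =>
    obtain ⟨h1, h2⟩ := dd_zero_ne h
    simp [h1, h2]
  | succ e ih =>
    obtain ⟨n, hn⟩ := dd_succ_ne h
    have h1 := ih hn
    have h2 : M' ∣ (r + s) * Quad n := hdvd.mul_right _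
    have h3 : N - r * S = ((N - Ee r s n) - r * (S - n)) + (r + s) * Quad n := by
      rw [Ee_eq]; ring
    rw [h3]
    exact dvd_add h1 h2

lemma dd_shift {r s : ℤ} (e : ℕ) (t : ℤ) : ∀ N S : ℤ,
    dd r s e N S =
      dd r s e (N - (r + s) * t * S + (e : ℤ) * ((r + s) * Quad (-t) - r * t))
        (S - (e : ℤ) * t) := by
  induction e with
  | zero =>
    intro N S
    simp only [Nat.cast_zero, zero_mul, add_zero, sub_zero]
    by_cases hS : S = 0
    · subst hS; simp
    · simp only [dd, hS, and_false, if_false]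
  | succ e ih =>
    intro N S
    have lhs : dd r s (e+1) N S
        = ∑ᶠ n : ℤ, dd r s e
            ((N - Ee r s n) - (r+s)*t*(S-n) + (e:ℤ)*((r+s)*Quad (-t) - r*t))
            (S - n - (e:ℤ)*t) := by
      simp only [dd]
      exact finsum_congr fun n => ih _ _
    have key : ∀ n : ℤ,
        (N - Ee r s (n + t)) - (r+s)*t*(S-(n+t)) + (e:ℤ)*((r+s)*Quad (-t) - r*t)
          = (N - (r+s)*t*S + ((e:ℤ)+1)*((r+s)*Quad (-t) - r*t)) - Ee r s n := by
      intro n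
      have h1 := Ee_add r s n t
      have h2 := quad_add_quad_neg t
      linear_combination -h1 - (r+s) * h2
    have key2 : ∀ n : ℤ, S - (n + t) - (e:ℤ)*t = S - ((e:ℤ)+1)*t - n := by
      intro n; ring
    rw [lhs, ← finsum_comp_equiv (Equiv.addRight t)
      (f := fun n => dd r s e
        ((N - Ee r s n) - (r+s)*t*(S-n) + (e:ℤ)*((r+s)*Quad (-t) - r*t))
        (S - n - (e:ℤ)*t))]
    simp only [Equiv.coe_addRight]
    have rhs : dd r s (e+1)
        (N - (r + s) * t * S + ((e+1 : ℕ) : ℤ) * ((r + s) * Quad (-t) - r * t))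
        (S - ((e+1 : ℕ) : ℤ) * t)
        = ∑ᶠ n : ℤ, dd r s e
            ((N - (r+s)*t*S + ((e:ℤ)+1)*((r+s)*Quad (-t) - r*t)) - Ee r s n)
            (S - ((e:ℤ)+1)*t - n) := by
      simp only [dd]
      push_cast
      rfl
    rw [rhs]
    apply finsum_congr
    intro n
    rw [key n, key2 n]

/-! ### finsum plumbing -/

lemma finsum_swap (F : ℤ → ℤ → ℚ) (s t : Finset ℤ)
    (h : ∀ m n, F m n ≠ 0 → m ∈ s ∧ n ∈ t) :
    ∑ᶠ m, ∑ᶠ n, F m n = ∑ᶠ n, ∑ᶠ m, F m n := by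
  have e1 : ∑ᶠ m, ∑ᶠ n, F m n = ∑ m ∈ s, ∑ n ∈ t, F m n := by
    rw [finsum_eq_finset_sum_of_support_subset]
    · exact Finset.sum_congr rfl fun m _ =>
        finsum_eq_finset_sum_of_support_subset _ fun n hn => (h m n hn).2
    · intro m hm
      obtain ⟨n, hn⟩ := finsum_exists_ne_zero hm
      exact (h m n hn).1
  have e2 : ∑ᶠ n, ∑ᶠ m, F m n = ∑ n ∈ t, ∑ m ∈ s, F m n := by
    rw [finsum_eq_finset_sum_of_support_subset]
    · exact Finset.sum_congr rfl fun n _ =>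
        finsum_eq_finset_sum_of_support_subset _ fun m hm => (h m n hm).1
    · intro n hn
      obtain ⟨m, hm⟩ := finsum_exists_ne_zero hn
      exact (h m n hm).2
  rw [e1, e2, Finset.sum_comm]

lemma finsum_swap' (F : ℤ → ℤ → ℚ) (hfin : {p : ℤ × ℤ | F p.1 p.2 ≠ 0}.Finite) :
    ∑ᶠ m, ∑ᶠ n, F m n = ∑ᶠ n, ∑ᶠ m, F m n := by
  classical
  apply finsum_swap F (hfin.toFinset.image Prod.fst) (hfin.toFinset.image Prod.snd)
  intro m n h
  constructor
  · exact Finset.mem_image.mpr ⟨(m, n), hfin.mem_toFinset.mpr h, rfl⟩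
  · exact Finset.mem_image.mpr ⟨(m, n), hfin.mem_toFinset.mpr h, rfl⟩

lemma pair_support_finite (F : ℤ → ℤ → ℚ) (A : Set ℤ) (hA : A.Finite)
    (h1 : ∀ m n, F m n ≠ 0 → m ∈ A) (h2 : ∀ m, {n | F m n ≠ 0}.Finite) :
    {p : ℤ × ℤ | F p.1 p.2 ≠ 0}.Finite := by
  apply Set.Finite.subset (Set.Finite.biUnion hA (fun m _ => (h2 m).image (fun n => (m, n))))
  rintro ⟨m, n⟩ hp
  exact Set.mem_biUnion (h1 m n hp) ⟨n, hp, rfl⟩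

lemma finsum3_to_sum (f : ℤ → ℤ → ℤ → ℚ) (s t u : Finset ℤ)
    (h : ∀ j S T, f j S T ≠ 0 → j ∈ s ∧ S ∈ t ∧ T ∈ u) :
    (∑ᶠ j, ∑ᶠ S, ∑ᶠ T, f j S T) = ∑ j ∈ s, ∑ S ∈ t, ∑ T ∈ u, f j S T := by
  rw [finsum_eq_finset_sum_of_support_subset]
  · apply Finset.sum_congr rfl
    intro j _
    rw [finsum_eq_finset_sum_of_support_subset]
    · apply Finset.sum_congr rfl
      intro S _
      exact finsum_eq_finset_sum_of_support_subset _ fun T hT => (h j S T hT).2.2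
    · intro S hS
      obtain ⟨T, hT⟩ := finsum_exists_ne_zero hS
      exact (h j S T hT).2.1
  · intro j hj
    obtain ⟨S, hS⟩ := finsum_exists_ne_zero hj
    obtain ⟨T, hT⟩ := finsum_exists_ne_zero hS
    exact (h j S T hT).1

lemma dd_shifted_supp_finite {r s : ℤ} (hL : 0 < r + s) (e : ℕ) (C n : ℤ) :
    {S : ℤ | dd r s e C (S - n) ≠ 0}.Finite := by
  apply Set.Finite.subset ((dd_suppS_finite hL e C).image (· + n))
  intro S hS
  exact ⟨S - n, hS, by ring⟩

/-! ### Coefficients of powers of theta series -/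

lemma pow_theta_coeff {ε r s : ℤ} (hL : 0 < r + s) (hε : (ε : ℚ) ≠ 0) (e : ℕ) (N : ℤ) :
    ((theta ε r s) ^ e).coeff N = ∑ᶠ S : ℤ, dd r s e N S * (ε : ℚ) ^ S := by
  induction e generalizing N with
  | zero =>
    rw [pow_zero]
    rw [finsum_eq_single _ (0 : ℤ) (fun S hS => by
      simp only [dd, hS, and_false, if_false, zero_mul])]
    simp only [dd, and_true, zpow_zero, mul_one, HahnSeries.coeff_one]
    split_ifs <;> rfl
  | succ e ih =>
    rw [pow_succ, mul_theta_coeff _ hL]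
    have step1 : ∀ n : ℤ, ((theta ε r s) ^ e).coeff (N - Ee r s n) * (ε : ℚ) ^ n
        = ∑ᶠ S : ℤ, dd r s e (N - Ee r s n) (S - n) * (ε : ℚ) ^ S := by
      intro n
      rw [ih]
      have hfin : (Function.support fun S => dd r s e (N - Ee r s n) S * (ε:ℚ) ^ S).Finite := by
        apply Set.Finite.subset (dd_suppS_finite hL e (N - Ee r s n))
        intro S hS
        simp only [Function.mem_support, ne_eq] at hS
        exact fun h0 => hS (by rw [h0, zero_mul])
      rw [finsum_mul _ _]
      rw [← finsum_comp_equiv (Equiv.addRight n)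
        (f := fun S => dd r s e (N - Ee r s n) (S - n) * (ε : ℚ) ^ S)]
      apply finsum_congr
      intro S
      simp only [Equiv.coe_addRight, add_sub_cancel_right]
      rw [zpow_add₀ hε, mul_assoc]
    rw [finsum_congr step1]
    have hswap : (∑ᶠ n : ℤ, ∑ᶠ S : ℤ, dd r s e (N - Ee r s n) (S - n) * (ε : ℚ) ^ S)
        = ∑ᶠ S : ℤ, ∑ᶠ n : ℤ, dd r s e (N - Ee r s n) (S - n) * (ε : ℚ) ^ S := by
      apply finsum_swap'
      apply pair_support_finite (fun n S => dd r s e (N - Ee r s n) (S - n) * (ε : ℚ) ^ S)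
        {n : ℤ | Ee r s n ≤ N + (e : ℤ) * (r - s) ^ 2} (finite_Ee_le hL _)
      · intro n S hns
        have h1 : dd r s e (N - Ee r s n) (S - n) ≠ 0 := fun h0 => hns (by rw [h0, zero_mul])
        have h2 := dd_lb hL e h1
        simp only [Set.mem_setOf_eq]
        linarith
      · intro n
        apply Set.Finite.subset (dd_shifted_supp_finite hL e (N - Ee r s n) n)
        intro S hS
        simp only [Set.mem_setOf_eq] at hS ⊢
        exact fun h0 => hS (by rw [h0, zero_mul])
    rw [hswap]
    apply finsum_congr
    intro S
    have hfin2 : (Function.support fun n => dd r s e (N - Ee r s n) (S - n)).Finite := by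
      apply Set.Finite.subset (finite_Ee_le hL (N + (e : ℤ) * (r - s) ^ 2))
      intro n hn
      simp only [Function.mem_support, ne_eq] at hn
      have h2 := dd_lb hL e hn
      simp only [Set.mem_setOf_eq]
      linarith
    rw [← finsum_mul _ _]
    rfl

/-! ### The sign-reversing involution on index triples -/

lemma sign_flip {ε₁ ε₂ : ℤ} (hε : (ε₁ = 1 ∧ ε₂ = -1) ∨ (ε₁ = -1 ∧ ε₂ = 1))
    {aa bb : ℤ} (haa : Odd aa) (hbb : Odd bb) (S T t : ℤ) (ht : Odd t) :
    (ε₁ : ℚ) ^ (S - bb * t) * (ε₂ : ℚ) ^ (T + aa * t)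
      = -((ε₁ : ℚ) ^ S * (ε₂ : ℚ) ^ T) := by
  have hne : (-1 : ℚ) ≠ 0 := by norm_num
  rcases hε with ⟨h1, h2⟩ | ⟨h1, h2⟩
  · subst h1; subst h2
    push_cast
    rw [one_zpow, one_zpow, zpow_add₀ hne, Odd.neg_one_zpow (haa.mul ht)]
    ring
  · subst h1; subst h2
    push_cast
    rw [one_zpow, one_zpow, show S - bb * t = S + bb * (-t) from by ring,
      zpow_add₀ hne, Odd.neg_one_zpow (hbb.mul ht.neg)]
    ring

lemma pair_arith (Lμ M aa bb r₁ r₂ N' j S T v : ℤ) (hM : M = bb + 2 * aa)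
    (hr : bb * r₁ = aa * r₂) (hv : S - 2 * T + 2 * aa = M * v) :
    N' - (j - Lμ * (2 * v - 1) * S + bb * (Lμ * Quad (-(2 * v - 1)) - r₁ * (2 * v - 1)))
      = (N' - j) - (2 * Lμ) * (-(2 * v - 1)) * T
          + aa * ((2 * Lμ) * Quad (-(-(2 * v - 1))) - r₂ * (-(2 * v - 1))) := by
  rw [neg_neg, quad_odd, quad_neg_odd]
  linear_combination (Lμ * (2 * v - 1)) * hv + (Lμ * (2 * v - 1) * v) * hM
    + (2 * v - 1) * hr

/-- The involution on triples `(j, S, T)`. -/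
def invo (M aa Lμ r₁ bb cc : ℤ) (x : ℤ × ℤ × ℤ) : ℤ × ℤ × ℤ :=
  if M ∣ (x.2.1 - 2 * x.2.2 + 2 * aa) then
    (x.1 - Lμ * (2 * ((x.2.1 - 2 * x.2.2 + 2 * aa) / M) - 1) * x.2.1
        + bb * (Lμ * Quad (-(2 * ((x.2.1 - 2 * x.2.2 + 2 * aa) / M) - 1))
            - r₁ * (2 * ((x.2.1 - 2 * x.2.2 + 2 * aa) / M) - 1)),
      x.2.1 - bb * (2 * ((x.2.1 - 2 * x.2.2 + 2 * aa) / M) - 1),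
      x.2.2 + cc * (2 * ((x.2.1 - 2 * x.2.2 + 2 * aa) / M) - 1))
  else x

lemma invo_on {M aa Lμ r₁ bb cc j S T v : ℤ} (hMne : M ≠ 0)
    (hv : S - 2 * T + 2 * aa = M * v) :
    invo M aa Lμ r₁ bb cc (j, S, T) =
      (j - Lμ * (2 * v - 1) * S + bb * (Lμ * Quad (-(2 * v - 1)) - r₁ * (2 * v - 1)),
       S - bb * (2 * v - 1), T + cc * (2 * v - 1)) := by
  have hdvd : M ∣ (S - 2 * T + 2 * aa) := ⟨v, hv⟩
  have hdiv : (S - 2 * T + 2 * aa) / M = v := by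
    rw [hv]; exact Int.mul_ediv_cancel_left v hMne
  rw [invo, if_pos hdvd]
  dsimp only
  rw [hdiv]

lemma invo_off {M aa Lμ r₁ bb cc : ℤ} (x : ℤ × ℤ × ℤ)
    (h : ¬ M ∣ (x.2.1 - 2 * x.2.2 + 2 * aa)) : invo M aa Lμ r₁ bb cc x = x := by
  rw [invo, if_neg h]

lemma invo_invol (M aa Lμ r₁ bb cc : ℤ) (hMne : M ≠ 0) (hba : bb + 2 * cc = M)
    (x : ℤ × ℤ × ℤ) : invo M aa Lμ r₁ bb cc (invo M aa Lμ r₁ bb cc x) = x := by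
  obtain ⟨j, S, T⟩ := x
  by_cases h : M ∣ ((j, S, T) : ℤ × ℤ × ℤ).2.1 - 2 * ((j, S, T) : ℤ × ℤ × ℤ).2.2 + 2 * aa
  · have h' : M ∣ (S - 2 * T + 2 * aa) := h
    obtain ⟨v, hv⟩ := h'
    rw [invo_on hMne hv]
    have hv2 : (S - bb * (2 * v - 1)) - 2 * (T + cc * (2 * v - 1)) + 2 * aa
        = M * (1 - v) := by linear_combination hv - (2 * v - 1) * hba
    rw [invo_on hMne hv2]
    have ht : 2 * (1 - v) - 1 = -(2 * v - 1) := by ring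
    rw [ht, neg_neg]
    simp only [Prod.mk.injEq]
    refine ⟨?_, ?_, ?_⟩
    · have hq := quad_add_quad_neg (2 * v - 1)
      linear_combination (bb * Lμ) * hq
    · ring
    · ring
  · rw [invo_off _ h, invo_off _ h]

lemma huff_coeff (M : ℤ) (G : LaurentSeries ℚ) (N : ℤ) :
    (huff M G).coeff N = if M ∣ N then G.coeff N else 0 := rfl

lemma core (μ ℓ m k M σ : ℤ) (hμ : 1 ≤ μ) (hℓ : 0 ≤ ℓ) (hm : 0 ≤ m)
    (hcop : Int.gcd (2 * ℓ + 1) (2 * m + 1) = 1)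
    (hM : M = 2 * ℓ + 4 * m + 3) (hσ : σ = 2 * (2 * m + 1) ^ 2 * k)
    (hk : Int.gcd k M = 1)
    (ε₁ ε₂ : ℤ) (hε : (ε₁ = 1 ∧ ε₂ = -1) ∨ (ε₁ = -1 ∧ ε₂ = 1)) :
    huff M (HahnSeries.single σ (1 : ℚ)
      * theta ε₁ ((2 * m + 1) * k) (μ * M - (2 * m + 1) * k) ^ (2 * ℓ + 1)
      * theta ε₂ ((2 * ℓ + 1) * k) (2 * μ * M - (2 * ℓ + 1) * k) ^ (2 * m + 1)) = 0 := by
  have hM0 : (0:ℤ) < M := by omega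
  have hMne : M ≠ 0 := by omega
  have hε₁0 : (ε₁ : ℚ) ≠ 0 := by rcases hε with ⟨h1, _⟩ | ⟨h1, _⟩ <;> subst h1 <;> norm_num
  have hε₂0 : (ε₂ : ℚ) ≠ 0 := by rcases hε with ⟨_, h2⟩ | ⟨_, h2⟩ <;> subst h2 <;> norm_num
  set r₁ : ℤ := (2 * m + 1) * k with hr₁
  set s₁ : ℤ := μ * M - (2 * m + 1) * k with hs₁
  set r₂ : ℤ := (2 * ℓ + 1) * k with hr₂
  set s₂ : ℤ := 2 * μ * M - (2 * ℓ + 1) * k with hs₂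
  have hrs₁ : r₁ + s₁ = μ * M := by rw [hr₁, hs₁]; ring
  have hrs₂ : r₂ + s₂ = 2 * (μ * M) := by rw [hr₂, hs₂]; ring
  have hLpos : 0 < μ * M := mul_pos (by omega) hM0
  have hL1 : 0 < r₁ + s₁ := by rw [hrs₁]; exact hLpos
  have hL2 : 0 < r₂ + s₂ := by rw [hrs₂]; linarith
  have hrs21 : 2 * (r₁ + s₁) = r₂ + s₂ := by rw [hrs₁, hrs₂]
  set e₁ : ℕ := (2 * ℓ + 1).toNat with he₁def
  set e₂ : ℕ := (2 * m + 1).toNat with he₂def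
  have he₁ : ((e₁ : ℤ)) = 2 * ℓ + 1 := Int.toNat_of_nonneg (by omega)
  have he₂ : ((e₂ : ℤ)) = 2 * m + 1 := Int.toNat_of_nonneg (by omega)
  have hzp1 : theta ε₁ r₁ s₁ ^ (2 * ℓ + 1 : ℤ) = theta ε₁ r₁ s₁ ^ e₁ := by
    rw [← he₁, zpow_natCast]
  have hzp2 : theta ε₂ r₂ s₂ ^ (2 * m + 1 : ℤ) = theta ε₂ r₂ s₂ ^ e₂ := by
    rw [← he₂, zpow_natCast]
  rw [hzp1, hzp2]
  ext N
  rw [huff_coeff, HahnSeries.coeff_zero]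
  by_cases hMN : M ∣ N
  swap
  · rw [if_neg hMN]
  rw [if_pos hMN]
  -- auxiliary facts
  have hodd_a : Odd ((e₂ : ℤ)) := by rw [he₂]; exact ⟨m, by ring⟩
  have hodd_b : Odd ((e₁ : ℤ)) := by rw [he₁]; exact ⟨ℓ, by ring⟩
  have hMba : M = (e₁ : ℤ) + 2 * (e₂ : ℤ) := by rw [he₁, he₂]; omega
  have hdvd1 : M ∣ (r₁ + s₁) := ⟨μ, by rw [hrs₁]; ring⟩
  have hdvd2 : M ∣ (r₂ + s₂) := ⟨2 * μ, by rw [hrs₂]; ring⟩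
  have hre : (e₁ : ℤ) * r₁ = (e₂ : ℤ) * r₂ := by rw [he₁, he₂, hr₁, hr₂]; ring
  have hcop1 : IsCoprime (M) k := by
    rw [Int.isCoprime_iff_gcd_eq_one, Int.gcd_comm]
    exact hk
  have hcopba : IsCoprime ((2 * ℓ + 1 : ℤ)) ((2 * m + 1 : ℤ)) :=
    Int.isCoprime_iff_gcd_eq_one.mpr hcop
  have hcop2 : IsCoprime (M) ((e₂ : ℤ)) := by
    rw [he₂]
    have h' : IsCoprime ((2 * ℓ + 1 : ℤ) + (2 * m + 1) * 2) ((2 * m + 1 : ℤ)) :=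
      hcopba.add_mul_left_left 2
    rwa [show (2 * ℓ + 1 : ℤ) + (2 * m + 1) * 2 = M from by omega] at h'
  have hcopMka : IsCoprime M (k * (e₂ : ℤ)) := hcop1.mul_right hcop2
  -- nonvanishing implications
  have hff_ne : ∀ j S T : ℤ,
      (dd r₁ s₁ e₁ j S * (ε₁:ℚ)^S) * (dd r₂ s₂ e₂ (N - σ - j) T * (ε₂:ℚ)^T) ≠ 0 →
      dd r₁ s₁ e₁ j S ≠ 0 ∧ dd r₂ s₂ e₂ (N - σ - j) T ≠ 0 := by
    intro j S T h
    constructor <;> intro h0 <;> apply h <;> rw [h0] <;> ring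
  -- boxes
  set jlo : ℤ := -(e₁:ℤ) * (r₁ - s₁)^2 with hjlo
  set jhi : ℤ := N - σ + (e₂:ℤ) * (r₂ - s₂)^2 with hjhi
  set KS : ℤ := (e₁:ℤ) * (8*(r₁+s₁)*jhi + (e₁:ℤ)*(r₁-s₁)^2) with hKS
  set BS : ℤ := KS + |(e₁:ℤ)*(r₁-s₁)| + 1 with hBS
  set KT : ℤ := (e₂:ℤ) * (8*(r₂+s₂)*(N-σ-jlo) + (e₂:ℤ)*(r₂-s₂)^2) with hKT
  set BT : ℤ := KT + |(e₂:ℤ)*(r₂-s₂)| + 1 with hBT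
  have hbox : ∀ j S T : ℤ,
      (dd r₁ s₁ e₁ j S * (ε₁:ℚ)^S) * (dd r₂ s₂ e₂ (N - σ - j) T * (ε₂:ℚ)^T) ≠ 0 →
      j ∈ Finset.Icc jlo jhi ∧ S ∈ Finset.Icc (-BS) BS ∧ T ∈ Finset.Icc (-BT) BT := by
    intro j S T hf
    obtain ⟨h1, h2⟩ := hff_ne j S T hf
    have hj1 := dd_lb hL1 e₁ h1
    have hj2 := dd_lb hL2 e₂ h2
    have hjge : jlo ≤ j := by rw [hjlo]; linarith
    have hjle : j ≤ jhi := by rw [hjhi]; linarith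
    have he₁nn : (0:ℤ) ≤ (e₁:ℤ) := Int.natCast_nonneg e₁
    have he₂nn : (0:ℤ) ≤ (e₂:ℤ) := Int.natCast_nonneg e₂
    have hcs1 := dd_cs hL1 e₁ h1
    have hmono1 : (e₁:ℤ) * (8*(r₁+s₁)*j + (e₁:ℤ)*(r₁-s₁)^2) ≤ KS := by
      rw [hKS]
      apply mul_le_mul_of_nonneg_left _ he₁nn
      have h8 : 8*(r₁+s₁)*j ≤ 8*(r₁+s₁)*jhi :=
        mul_le_mul_of_nonneg_left hjle (by linarith)
      linarith
    obtain ⟨hS1, hS2⟩ := sq_le_box (by linarith : (1:ℤ) ≤ 2*(r₁+s₁)) (le_trans hcs1 hmono1)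
    have hcs2 := dd_cs hL2 e₂ h2
    have hmono2 : (e₂:ℤ) * (8*(r₂+s₂)*(N-σ-j) + (e₂:ℤ)*(r₂-s₂)^2) ≤ KT := by
      rw [hKT]
      apply mul_le_mul_of_nonneg_left _ he₂nn
      have h8 : 8*(r₂+s₂)*(N-σ-j) ≤ 8*(r₂+s₂)*(N-σ-jlo) :=
        mul_le_mul_of_nonneg_left (by linarith) (by linarith)
      linarith
    obtain ⟨hT1, hT2⟩ := sq_le_box (by linarith : (1:ℤ) ≤ 2*(r₂+s₂)) (le_trans hcs2 hmono2)
    refine ⟨Finset.mem_Icc.mpr ⟨hjge, hjle⟩, Finset.mem_Icc.mpr ⟨?_, ?_⟩,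
      Finset.mem_Icc.mpr ⟨?_, ?_⟩⟩
    · rw [hBS]; exact hS1
    · rw [hBS]; exact hS2
    · rw [hBT]; exact hT1
    · rw [hBT]; exact hT2
  set BOX : Finset (ℤ × ℤ × ℤ) :=
    Finset.Icc jlo jhi ×ˢ Finset.Icc (-BS) BS ×ˢ Finset.Icc (-BT) BT with hBOX
  set F : ℤ × ℤ × ℤ → ℚ := fun x => (dd r₁ s₁ e₁ x.1 x.2.1 * (ε₁:ℚ)^x.2.1)
      * (dd r₂ s₂ e₂ (N - σ - x.1) x.2.2 * (ε₂:ℚ)^x.2.2) with hFdef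
  -- the coefficient as a boxed sum
  have hF1 : ∀ j : ℤ,
      (HahnSeries.single σ (1:ℚ) * theta ε₁ r₁ s₁ ^ e₁).coeff j
        = (theta ε₁ r₁ s₁ ^ e₁).coeff (j - σ) := by
    intro j
    have h := HahnSeries.coeff_single_mul_add (r := (1:ℚ))
      (x := theta ε₁ r₁ s₁ ^ e₁) (a := j - σ) (b := σ)
    rw [sub_add_cancel, one_mul] at h
    exact h
  have hfin1 : ∀ j : ℤ, (Function.support fun S => dd r₁ s₁ e₁ j S * (ε₁:ℚ)^S).Finite := by
    intro j
    apply Set.Finite.subset (dd_suppS_finite hL1 e₁ j)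
    intro S hS
    simp only [Function.mem_support, ne_eq] at hS
    exact fun h0 => hS (by rw [h0, zero_mul])
  have hfin2 : ∀ j : ℤ,
      (Function.support fun T => dd r₂ s₂ e₂ (N - σ - j) T * (ε₂:ℚ)^T).Finite := by
    intro j
    apply Set.Finite.subset (dd_suppS_finite hL2 e₂ (N - σ - j))
    intro T hT
    simp only [Function.mem_support, ne_eq] at hT
    exact fun h0 => hT (by rw [h0, zero_mul])
  have key : (HahnSeries.single σ (1:ℚ) * theta ε₁ r₁ s₁ ^ e₁ * theta ε₂ r₂ s₂ ^ e₂).coeff N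
      = ∑ x ∈ BOX, F x := by
    calc (HahnSeries.single σ (1:ℚ) * theta ε₁ r₁ s₁ ^ e₁ * theta ε₂ r₂ s₂ ^ e₂).coeff N
        = ∑ᶠ j : ℤ, (HahnSeries.single σ (1:ℚ) * theta ε₁ r₁ s₁ ^ e₁).coeff j
            * (theta ε₂ r₂ s₂ ^ e₂).coeff (N - j) := mul_coeff_finsum _ _ N
      _ = ∑ᶠ j : ℤ, (theta ε₁ r₁ s₁ ^ e₁).coeff (j - σ)
            * (theta ε₂ r₂ s₂ ^ e₂).coeff (N - j) := finsum_congr fun j => by rw [hF1 j]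
      _ = ∑ᶠ j : ℤ, (theta ε₁ r₁ s₁ ^ e₁).coeff j
            * (theta ε₂ r₂ s₂ ^ e₂).coeff (N - σ - j) := by
          rw [← finsum_comp_equiv (Equiv.addRight σ)
            (f := fun j => (theta ε₁ r₁ s₁ ^ e₁).coeff (j - σ)
              * (theta ε₂ r₂ s₂ ^ e₂).coeff (N - j))]
          apply finsum_congr
          intro j
          simp only [Equiv.coe_addRight, add_sub_cancel_right]
          rw [show N - (j + σ) = N - σ - j from by ring]
      _ = ∑ᶠ j : ℤ, (∑ᶠ S : ℤ, dd r₁ s₁ e₁ j S * (ε₁:ℚ)^S)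
            * (∑ᶠ T : ℤ, dd r₂ s₂ e₂ (N - σ - j) T * (ε₂:ℚ)^T) := by
          apply finsum_congr; intro j
          rw [pow_theta_coeff hL1 hε₁0, pow_theta_coeff hL2 hε₂0]
      _ = ∑ᶠ j : ℤ, ∑ᶠ S : ℤ, ∑ᶠ T : ℤ, (dd r₁ s₁ e₁ j S * (ε₁:ℚ)^S)
            * (dd r₂ s₂ e₂ (N - σ - j) T * (ε₂:ℚ)^T) := by
          apply finsum_congr; intro j
          rw [finsum_mul _ _]
          exact finsum_congr fun S => mul_finsum _ _
      _ = ∑ x ∈ BOX, F x := by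
          rw [finsum3_to_sum (fun j S T => (dd r₁ s₁ e₁ j S * (ε₁:ℚ)^S)
            * (dd r₂ s₂ e₂ (N - σ - j) T * (ε₂:ℚ)^T)) _ _ _ hbox]
          rw [hBOX, hFdef]
          simp only [Finset.sum_product]
  rw [key]
  -- the involution
  set ι : ℤ × ℤ × ℤ → ℤ × ℤ × ℤ := invo M (e₂:ℤ) (r₁+s₁) r₁ (e₁:ℤ) (e₂:ℤ) with hι
  have hboxF : ∀ x : ℤ × ℤ × ℤ, F x ≠ 0 → x ∈ BOX := by
    rintro ⟨j, S, T⟩ hf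
    rw [hFdef] at hf
    dsimp only at hf
    obtain ⟨m1, m2, m3⟩ := hbox j S T hf
    rw [hBOX]
    exact Finset.mem_product.mpr ⟨m1, Finset.mem_product.mpr ⟨m2, m3⟩⟩
  have hoff : ∀ x : ℤ × ℤ × ℤ, ¬ M ∣ (x.2.1 - 2*x.2.2 + 2*(e₂:ℤ)) → F x = 0 := by
    rintro ⟨j, S, T⟩ hnd
    by_contra hf
    rw [hFdef] at hf
    dsimp only at hf
    obtain ⟨h1, h2⟩ := hff_ne j S T hf
    have hdv1 := dd_dvd hdvd1 e₁ h1
    have hdv2 := dd_dvd hdvd2 e₂ h2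
    have hsum : M ∣ (σ + r₁*S + r₂*T) := by
      have h3 : M ∣ ((j - r₁*S) + ((N - σ - j) - r₂*T)) := dvd_add hdv1 hdv2
      have h4 : M ∣ (N - ((j - r₁*S) + ((N - σ - j) - r₂*T))) := dvd_sub hMN h3
      rwa [show N - ((j - r₁*S) + ((N - σ - j) - r₂*T)) = σ + r₁*S + r₂*T from by ring] at h4
    have hXdvd : M ∣ (k*(e₂:ℤ)) * (S - 2*T + 2*(e₂:ℤ)) := by
      have h5 : M ∣ ((σ + r₁*S + r₂*T) - M*(k*T)) := dvd_sub hsum ⟨k*T, rfl⟩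
      rwa [show (σ + r₁*S + r₂*T) - M*(k*T) = (k*(e₂:ℤ))*(S - 2*T + 2*(e₂:ℤ)) from by
        rw [hr₁, hr₂, hσ, he₂, hM]; ring] at h5
    exact hnd (hcopMka.dvd_of_dvd_mul_left hXdvd)
  have hpair : ∀ x : ℤ × ℤ × ℤ, M ∣ (x.2.1 - 2*x.2.2 + 2*(e₂:ℤ)) → F (ι x) = -F x := by
    rintro ⟨j, S, T⟩ hbr
    obtain ⟨v, hv⟩ := hbr
    rw [hι, invo_on hMne hv, hFdef]
    dsimp only
    have hdd1eq := (dd_shift (r := r₁) (s := s₁) e₁ (2*v-1) j S).symm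
    have hdd2eq : dd r₂ s₂ e₂
        (N - σ - (j - (r₁+s₁)*(2*v-1)*S + (e₁:ℤ)*((r₁+s₁)*Quad (-(2*v-1)) - r₁*(2*v-1))))
        (T + (e₂:ℤ)*(2*v-1)) = dd r₂ s₂ e₂ (N - σ - j) T := by
      rw [pair_arith (r₁+s₁) M (e₂:ℤ) (e₁:ℤ) r₁ r₂ (N-σ) j S T v hMba hre hv, hrs21,
        show T + (e₂:ℤ)*(2*v-1) = T - (e₂:ℤ)*(-(2*v-1)) from by ring]
      exact (dd_shift (r := r₂) (s := s₂) e₂ (-(2*v-1)) (N-σ-j) T).symm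
    rw [hdd1eq, hdd2eq]
    have hs := sign_flip hε hodd_a hodd_b S T (2*v-1) ⟨v-1, by ring⟩
    linear_combination (dd r₁ s₁ e₁ j S * dd r₂ s₂ e₂ (N-σ-j) T) * hs
  have hinvol : ∀ x : ℤ × ℤ × ℤ, ι (ι x) = x := by
    intro x
    rw [hι]
    exact invo_invol M (e₂:ℤ) (r₁+s₁) r₁ (e₁:ℤ) (e₂:ℤ) hMne hMba.symm x
  have hext : ∑ x ∈ BOX, F x = ∑ x ∈ BOX ∪ BOX.image ι, F x := by
    apply Finset.sum_subset Finset.subset_union_left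
    intro x _ hnx
    by_contra hFx
    exact hnx (hboxF x hFx)
  rw [hext]
  refine Finset.sum_involution (fun x _ => ι x) ?_ ?_ ?_ ?_
  · intro x hx
    show F x + F (ι x) = 0
    by_cases hbr : M ∣ (x.2.1 - 2*x.2.2 + 2*(e₂:ℤ))
    · rw [hpair x hbr]; ring
    · rw [show ι x = x from by rw [hι]; exact invo_off x hbr, hoff x hbr]; ring
  · intro x hx hne0
    show ι x ≠ x
    by_cases hbr : M ∣ (x.2.1 - 2*x.2.2 + 2*(e₂:ℤ))
    · obtain ⟨j, S, T⟩ := x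
      obtain ⟨v, hv⟩ := hbr
      intro heq
      rw [hι, invo_on hMne hv] at heq
      have h2 := congrArg (fun y : ℤ × ℤ × ℤ => y.2.1) heq
      dsimp only at h2
      have hbbne : ((e₁:ℤ)) ≠ 0 := by rw [he₁]; omega
      have htne : (2*v-1 : ℤ) ≠ 0 := by omega
      have hmul := mul_ne_zero hbbne htne
      have : (e₁:ℤ) * (2*v-1) = 0 := by linarith
      exact hmul this
    · exact absurd (hoff x hbr) hne0
  · intro x hx
    show ι x ∈ BOX ∪ BOX.image ι
    rcases Finset.mem_union.mp hx with h | h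
    · exact Finset.mem_union_right _ (Finset.mem_image_of_mem _ h)
    · obtain ⟨y, hy, hyx⟩ := Finset.mem_image.mp h
      have hxy : ι x = y := by rw [← hyx]; exact hinvol y
      rw [hxy]
      exact Finset.mem_union_left _ hy
  · intro x hx
    show ι (ι x) = x
    exact hinvol x

/-- **Theorem (Type II, eq. (1.12))**: with `gcd(2ℓ+1, 2m+1) = 1`,
`M = 2ℓ + 4m + 3` and `σ = 2(2m+1)²k`, for `(κ, λ) ∈ {(0,1), (1,0)}`
and `gcd(k, M) = 1`,
`H_M(q^σ · f((-1)^κ q^{(2m+1)k}, (-1)^κ q^{μM-(2m+1)k})^{2ℓ+1} ·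
  f((-1)^λ q^{(2ℓ+1)k}, (-1)^λ q^{2μM-(2ℓ+1)k})^{2m+1}) = 0`. -/
theorem statement8 (μ ℓ m k M σ : ℤ) (hμ : 1 ≤ μ) (hℓ : 0 ≤ ℓ) (hm : 0 ≤ m)
    (hcop : Int.gcd (2 * ℓ + 1) (2 * m + 1) = 1)
    (hM : M = 2 * ℓ + 4 * m + 3) (hσ : σ = 2 * (2 * m + 1) ^ 2 * k)
    (κ lam : ℕ) (hκlam : (κ = 0 ∧ lam = 1) ∨ (κ = 1 ∧ lam = 0))
    (hk : Int.gcd k M = 1) :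
    huff M (HahnSeries.single σ (1 : ℚ)
      * theta ((-1) ^ κ) ((2 * m + 1) * k) (μ * M - (2 * m + 1) * k) ^ (2 * ℓ + 1)
      * theta ((-1) ^ lam) ((2 * ℓ + 1) * k)
          (2 * μ * M - (2 * ℓ + 1) * k) ^ (2 * m + 1)) = 0 := by
  rcases hκlam with ⟨hκ, hlam⟩ | ⟨hκ, hlam⟩ <;> subst hκ <;> subst hlam
  · simp only [pow_zero, pow_one]
    exact core μ ℓ m k M σ hμ hℓ hm hcop hM hσ hk 1 (-1) (Or.inl ⟨rfl, rfl⟩)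
  · simp only [pow_zero, pow_one]
    exact core μ ℓ m k M σ hμ hℓ hm hcop hM hσ hk (-1) 1 (Or.inr ⟨rfl, rfl⟩)

end ThetaVanish
end
end

section
/- Let μ ≥ 1, ℓ ≥ 0, m ≥ 0 be integers with gcd(2ℓ+2, 2m+1) = 1, set M = 4ℓ + 2m + 5 and σ = 3·(2ℓ+2)²·k. Then for every pair (κ, λ) ∈ {(0,1), (1,1)} and every integer k with gcd(k, M) = 1, one has H_M( q^σ · f((−1)^κ q^{(2m+1)k}, (−1)^κ q^{μM−(2m+1)k})^{2ℓ+2} · f((−1)^λ q^{(4ℓ+4)k}, (−1)^λ q^{2μM−(4ℓ+4)k})^{2m+1} ) = 0. -/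
/-!
Common setup: Ramanujan theta series as formal Laurent series over `ℚ`
(`LaurentSeries ℚ = HahnSeries ℤ ℚ`), and the huffing operator `H_M`.
-/

noncomputable section

open scoped Classical

namespace ThetaVanish

lemma two_mul_tri (n : ℤ) : 2 * (n * (n + 1) / 2) = n * (n + 1) := by
  obtain ⟨c, hc⟩ := Int.even_mul_succ_self n; omega

lemma two_mul_tri' (n : ℤ) : 2 * (n * (n - 1) / 2) = n * (n - 1) := by
  obtain ⟨c, hc⟩ := Int.even_mul_pred_self n
  have h : n * (n - 1) = 2 * c := by omega
  omega

def eFun (r s : ℤ) (n : ℤ) : ℤ := r * (n * (n + 1) / 2) + s * (n * (n - 1) / 2)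

lemma two_eFun (r s n : ℤ) : 2 * eFun r s n = (r + s) * n ^ 2 + (r - s) * n := by
  unfold eFun
  linear_combination r * two_mul_tri n + s * two_mul_tri' n

lemma eFun_shift (r s n t : ℤ) :
    2 * eFun r s (n + t) = 2 * eFun r s n + (r + s) * (2 * t * n + t ^ 2) + (r - s) * t := by
  have h1 := two_eFun r s (n + t)
  have h2 := two_eFun r s n
  linear_combination h1 - h2

lemma eFun_lb (r s : ℤ) (h : 0 < r + s) (n : ℤ) : -(r - s) ^ 2 ≤ eFun r s n := by
  have h2 := two_eFun r s n
  nlinarith [sq_nonneg (2 * n + r - s), sq_nonneg (r - s),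
    mul_nonneg (show (0:ℤ) ≤ r + s - 1 by omega) (sq_nonneg n)]

lemma eFun_fiber (r s : ℤ) (h : 0 < r + s) (N : ℤ) :
    {n : ℤ | eFun r s n = N}.Finite := by
  apply Set.Finite.subset (Set.finite_Icc (-(4 * N ^ 2 + (r - s) ^ 2 + 4)) (4 * N ^ 2 + (r - s) ^ 2 + 4))
  intro n hn
  simp only [Set.mem_setOf_eq] at hn
  have h2 := two_eFun r s n
  rw [hn] at h2
  have hsq : n ^ 2 ≤ 4 * N ^ 2 + (r - s) ^ 2 + 4 := by
    nlinarith [sq_nonneg (2 * n + r - s), sq_nonneg (N - 1),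
      mul_nonneg (show (0:ℤ) ≤ r + s - 1 by omega) (sq_nonneg n)]
  constructor <;> nlinarith [sq_nonneg (n - 1), sq_nonneg (n + 1)]

structure SRep {ι : Type} (L : ℤ) (e : ι → ℤ) (c : ι → ℚ) (S : LaurentSeries ℚ) : Prop where
  hcoeff : ∀ N : ℤ, S.coeff N = ∑ᶠ i : ι, if e i = N then c i else 0
  hlb : ∀ i : ι, L ≤ e i
  hfin : ∀ N : ℤ, {i : ι | e i = N}.Finite

namespace SRep

variable {ι ι₁ ι₂ : Type} {L L₁ L₂ : ℤ} {e : ι → ℤ} {c : ι → ℚ} {S : LaurentSeries ℚ}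
  {e₁ : ι₁ → ℤ} {c₁ : ι₁ → ℚ} {S₁ : LaurentSeries ℚ}
  {e₂ : ι₂ → ℤ} {c₂ : ι₂ → ℚ} {S₂ : LaurentSeries ℚ}

theorem supp (h : SRep L e c S) : S.support ⊆ Set.Ici L := by
  intro N hN
  rw [HahnSeries.mem_support, h.hcoeff] at hN
  by_contra hc
  apply hN
  apply finsum_eq_zero_of_forall_eq_zero
  intro i
  rw [if_neg]
  intro hi
  exact hc (hi ▸ h.hlb i)

theorem coeff_eq_sum (h : SRep L e c S) (N : ℤ) :
    S.coeff N = ∑ i ∈ (h.hfin N).toFinset, c i := by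
  rw [h.hcoeff]
  rw [finsum_eq_finset_sum_of_support_subset _ (s := (h.hfin N).toFinset) ?_]
  · apply Finset.sum_congr rfl
    intro i hi
    rw [Set.Finite.mem_toFinset] at hi
    exact if_pos hi
  · intro i hi
    rw [Function.mem_support] at hi
    by_cases he : e i = N
    · simpa using he
    · exact absurd (if_neg he) hi

theorem equiv (h : SRep L e c S) (φ : ι₂ ≃ ι) : SRep L (e ∘ φ) (c ∘ φ) S where
  hcoeff N := by
    rw [h.hcoeff]
    exact (finsum_comp_equiv φ (f := fun i => if e i = N then c i else 0)).symm
  hlb i := h.hlb (φ i)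
  hfin N := (h.hfin N).preimage (φ.injective.injOn)

theorem mono {L' : ℤ} (h : SRep L e c S) (hL : L' ≤ L) : SRep L' e c S :=
  ⟨h.hcoeff, fun i => le_trans hL (h.hlb i), h.hfin⟩

theorem congr_fun {e' : ι → ℤ} {c' : ι → ℚ} (h : SRep L e c S) (he : ∀ i, e' i = e i)
    (hc : ∀ i, c' i = c i) : SRep L e' c' S := by
  have he' : e' = e := funext he
  have hc' : c' = c := funext hc
  rw [he', hc']; exact h
end SRep

-- generic mul coefficient lemma
theorem mul_coeff_Icc (x y : LaurentSeries ℚ) {L₁ L₂ : ℤ} (hx : x.support ⊆ Set.Ici L₁)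
    (hy : y.support ⊆ Set.Ici L₂) (N : ℤ) :
    (x * y).coeff N = ∑ u ∈ Finset.Icc L₁ (N - L₂), x.coeff u * y.coeff (N - u) := by
  rw [HahnSeries.coeff_mul]
  rw [← Finset.sum_image (g := fun u : ℤ => (u, N - u))
    (f := fun p : ℤ × ℤ => x.coeff p.1 * y.coeff p.2)
    (by intro a _ b _ hab; simpa using congrArg Prod.fst hab)]
  apply Finset.sum_subset
  · intro p hp
    rw [Finset.mem_addAntidiagonal] at hp
    obtain ⟨h1, h2, h3⟩ := hp
    rw [Finset.mem_image]
    refine ⟨p.1, ?_, ?_⟩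
    · rw [Finset.mem_Icc]
      have := hx h1
      have := hy h2
      simp only [Set.mem_Ici] at *
      omega
    · have : p.2 = N - p.1 := by omega
      rw [← this]
  · intro p hp hnp
    rw [Finset.mem_image] at hp
    obtain ⟨u, _, rfl⟩ := hp
    rw [Finset.mem_addAntidiagonal] at hnp
    push_neg at hnp
    simp only [HahnSeries.mem_support, not_not] at hnp
    by_cases h1 : x.coeff u = 0
    · simp [h1]
    by_cases h2 : y.coeff (N - u) = 0
    · simp [h2]
    · exact absurd (by omega : u + (N - u) = N) (hnp h1 h2)

namespace SRep
variable {ι ι₁ ι₂ : Type} {L L₁ L₂ : ℤ} {e : ι → ℤ} {c : ι → ℚ} {S : LaurentSeries ℚ}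
  {e₁ : ι₁ → ℤ} {c₁ : ι₁ → ℚ} {S₁ : LaurentSeries ℚ}
  {e₂ : ι₂ → ℤ} {c₂ : ι₂ → ℚ} {S₂ : LaurentSeries ℚ}
theorem mul (h₁ : SRep L₁ e₁ c₁ S₁) (h₂ : SRep L₂ e₂ c₂ S₂) :
    SRep (L₁ + L₂) (fun p : ι₁ × ι₂ => e₁ p.1 + e₂ p.2) (fun p => c₁ p.1 * c₂ p.2) (S₁ * S₂) where
  hlb p := add_le_add (h₁.hlb p.1) (h₂.hlb p.2)
  hfin N := by
    apply Set.Finite.subset (Set.Finite.biUnion (Set.finite_Icc L₁ (N - L₂)) (fun u _ =>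
      ((h₁.hfin u).prod (h₂.hfin (N - u)))))
    intro p hp
    simp only [Set.mem_setOf_eq] at hp
    simp only [Set.mem_iUnion, Set.mem_Icc, Set.mem_prod, Set.mem_setOf_eq]
    exact ⟨e₁ p.1, ⟨⟨h₁.hlb p.1, by have := h₂.hlb p.2; omega⟩, rfl, by omega⟩⟩
  hcoeff N := by
    classical
    rw [mul_coeff_Icc S₁ S₂ h₁.supp h₂.supp N]
    have hfs : ∀ u : ℤ, S₁.coeff u * S₂.coeff (N - u)
        = ∑ p ∈ (h₁.hfin u).toFinset ×ˢ (h₂.hfin (N - u)).toFinset, c₁ p.1 * c₂ p.2 := by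
      intro u
      rw [h₁.coeff_eq_sum u, h₂.coeff_eq_sum (N - u), Finset.sum_mul_sum, ← Finset.sum_product']
    rw [Finset.sum_congr rfl (fun u _ => hfs u)]
    -- now RHS finsum
    have hdisj : (Finset.Icc L₁ (N - L₂) : Set ℤ).PairwiseDisjoint
        (fun u => (h₁.hfin u).toFinset ×ˢ (h₂.hfin (N - u)).toFinset) := by
      intro u _ v _ huv
      apply Finset.disjoint_left.2
      intro p hp hq
      simp only [Finset.mem_product, Set.Finite.mem_toFinset, Set.mem_setOf_eq] at hp hq
      exact huv (hp.1.symm.trans hq.1)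
    rw [← Finset.sum_biUnion hdisj]
    rw [finsum_eq_finset_sum_of_support_subset _
      (s := (Finset.Icc L₁ (N - L₂)).biUnion
        (fun u => (h₁.hfin u).toFinset ×ˢ (h₂.hfin (N - u)).toFinset)) ?_]
    · apply (Finset.sum_congr rfl ?_).symm
      intro p hp
      simp only [Finset.mem_biUnion, Finset.mem_product, Set.Finite.mem_toFinset,
        Set.mem_setOf_eq, Finset.mem_Icc] at hp
      obtain ⟨u, _, h1, h2⟩ := hp
      rw [if_pos (by omega)]
    · intro p hp
      rw [Function.mem_support] at hp
      have he : e₁ p.1 + e₂ p.2 = N := by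
        by_contra hc
        exact hp (if_neg hc)
      simp only [Finset.coe_biUnion, Finset.mem_coe, Finset.mem_Icc, Set.mem_iUnion,
        Finset.mem_product, Set.Finite.mem_toFinset, Set.mem_setOf_eq]
      exact ⟨e₁ p.1, ⟨⟨h₁.hlb p.1, by have := h₂.hlb p.2; omega⟩, rfl, by omega⟩⟩

theorem one : SRep (ι := PUnit) 0 (fun _ => 0) (fun _ => 1) 1 where
  hcoeff N := by
    rw [HahnSeries.coeff_one, finsum_unique]
    simp [eq_comm]
  hlb _ := le_refl 0
  hfin N := Set.toFinite _

theorem single (σ : ℤ) : SRep (ι := PUnit) σ (fun _ => σ) (fun _ => 1) (HahnSeries.single σ 1) where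
  hcoeff N := by
    rw [HahnSeries.coeff_single, finsum_unique]
    simp [eq_comm]
  hlb _ := le_refl σ
  hfin N := Set.toFinite _

theorem pow (h : SRep L e c S) (A : ℕ) :
    SRep ((A : ℤ) * L) (fun g : Fin A → ι => ∑ i, e (g i)) (fun g => ∏ i, c (g i)) (S ^ A) := by
  induction A with
  | zero =>
    rw [pow_zero]
    exact ((one.equiv (Equiv.equivPUnit (Fin 0 → ι)))).congr_fun
      (fun g => by simp) (fun g => by simp) |>.mono (by simp)
  | succ A ih =>
    rw [pow_succ']
    have hmul := (h.mul ih)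
    refine ((hmul.equiv ((Fin.consEquiv (fun _ : Fin (A+1) => ι)).symm)).congr_fun
      (fun g => ?_) (fun g => ?_)).mono (by push_cast; ring_nf; exact le_refl _)
    · show ∑ i, e (g i) = e (g 0) + ∑ i : Fin A, e (Fin.tail g i)
      rw [Fin.sum_univ_succ]
      rfl
    · show ∏ i, c (g i) = c (g 0) * ∏ i : Fin A, c (Fin.tail g i)
      rw [Fin.prod_univ_succ]
      rfl

end SRep
section Invol

abbrev IdxT (A B : ℕ) : Type := (PUnit × (Fin A → ℤ)) × (Fin B → ℤ)

def dval {A B : ℕ} (p : IdxT A B) : ℤ := (∑ i, p.1.2 i) - ∑ j, p.2 j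

def ccv (M a : ℤ) {A B : ℕ} (p : IdxT A B) : ℤ := (3 * a - 2 * dval p) / M - 1

def phiv (M a : ℤ) {A B : ℕ} (p : IdxT A B) : IdxT A B :=
  if M ∣ (3 * a - 2 * dval p) then
    ((p.1.1, fun i => p.1.2 i + 2 * ccv M a p), fun j => p.2 j - ccv M a p)
  else p

variable {A B : ℕ} {M a b : ℤ}

lemma cc_spec (hM0 : M ≠ 0) (p : IdxT A B) (hg : M ∣ (3 * a - 2 * dval p)) :
    3 * a - 2 * dval p = M * (ccv M a p + 1) := by
  obtain ⟨t, ht⟩ := hg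
  rw [ccv, ht, Int.mul_ediv_cancel_left _ hM0]
  ring

lemma phiv_of_good (p : IdxT A B) (hg : M ∣ (3 * a - 2 * dval p)) :
    phiv M a p = ((p.1.1, fun i => p.1.2 i + 2 * ccv M a p), fun j => p.2 j - ccv M a p) := by
  rw [phiv, if_pos hg]

lemma dval_phi (hA : (A : ℤ) = a) (hB : (B : ℤ) = b) (hM : M = 2 * a + b)
    (p : IdxT A B) (hg : M ∣ (3 * a - 2 * dval p)) :
    dval (phiv M a p) = dval p + M * ccv M a p := by
  rw [phiv_of_good p hg, dval, dval]
  simp only [Finset.sum_add_distrib, Finset.sum_sub_distrib, Finset.sum_const,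
    Finset.card_univ, Fintype.card_fin, nsmul_eq_mul]
  linear_combination (2 * ccv M a p) * hA + (ccv M a p) * hB - (ccv M a p) * hM

lemma phi_good (hM0 : M ≠ 0) (hA : (A : ℤ) = a) (hB : (B : ℤ) = b) (hM : M = 2 * a + b)
    (p : IdxT A B) (hg : M ∣ (3 * a - 2 * dval p)) :
    (M ∣ (3 * a - 2 * dval (phiv M a p))) ∧ ccv M a (phiv M a p) = - ccv M a p := by
  have h1 := dval_phi hA hB hM p hg
  have h2 := cc_spec hM0 p hg
  have h3 : 3 * a - 2 * dval (phiv M a p) = M * (1 - ccv M a p) := by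
    rw [h1]; linear_combination h2
  refine ⟨⟨1 - ccv M a p, h3⟩, ?_⟩
  rw [ccv, h3, Int.mul_ediv_cancel_left _ hM0]
  ring

lemma phi_invol (hM0 : M ≠ 0) (hA : (A : ℤ) = a) (hB : (B : ℤ) = b) (hM : M = 2 * a + b) :
    Function.Involutive (phiv M a (A := A) (B := B)) := by
  intro p
  by_cases hg : M ∣ (3 * a - 2 * dval p)
  · have hgd := phi_good hM0 hA hB hM p hg
    rw [phiv_of_good _ hgd.1, hgd.2, phiv_of_good p hg]
    refine Prod.ext (Prod.ext rfl (funext fun i => ?_)) (funext fun j => ?_) <;> dsimp <;> ring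
  · have h : phiv M a p = p := by rw [phiv, if_neg hg]
    rw [h, h]

lemma phi_ne (p : IdxT A B) (hA0 : 0 < A) (hg : M ∣ (3 * a - 2 * dval p))
    (hc : ccv M a p ≠ 0) : phiv M a p ≠ p := by
  intro he
  rw [phiv_of_good p hg] at he
  have h2 := congrArg (fun q : IdxT A B => q.1.2 ⟨0, hA0⟩) he
  dsimp at h2
  omega

end Invol
section ECT

def eT (σ r₁ s₁ r₂ s₂ : ℤ) {A B : ℕ} (p : IdxT A B) : ℤ :=
  (σ + ∑ i, eFun r₁ s₁ (p.1.2 i)) + ∑ j, eFun r₂ s₂ (p.2 j)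

def cT (ε₁ ε₂ : ℚ) {A B : ℕ} (p : IdxT A B) : ℚ :=
  ((1 : ℚ) * ∏ i, ε₁ ^ (p.1.2 i)) * ∏ j, ε₂ ^ (p.2 j)

lemma sum_two_eFun {n : ℕ} (r s : ℤ) (g : Fin n → ℤ) :
    ∑ i, 2 * eFun r s (g i) = (r + s) * (∑ i, (g i) ^ 2) + (r - s) * (∑ i, g i) := by
  rw [Finset.mul_sum, Finset.mul_sum, ← Finset.sum_add_distrib]
  exact Finset.sum_congr rfl fun i _ => two_eFun r s (g i)

lemma sum_eFun_shift {n : ℕ} (r s t : ℤ) (g : Fin n → ℤ) :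
    ∑ i, 2 * eFun r s (g i + t)
      = (∑ i, 2 * eFun r s (g i))
        + (((r + s) * (2 * t)) * (∑ i, g i) + (n : ℤ) * ((r + s) * t ^ 2 + (r - s) * t)) := by
  have h : ∀ i : Fin n, 2 * eFun r s (g i + t)
      = 2 * eFun r s (g i) + (((r + s) * (2 * t)) * (g i) + ((r + s) * t ^ 2 + (r - s) * t)) :=
    fun i => by linear_combination eFun_shift r s (g i) t
  rw [Finset.sum_congr rfl fun i _ => h i, Finset.sum_add_distrib, Finset.sum_add_distrib,
    ← Finset.mul_sum, Finset.sum_const, Finset.card_univ, Fintype.card_fin, nsmul_eq_mul,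
    ← Finset.mul_sum]

variable {A B : ℕ} {μ a b k M σ r₁ s₁ r₂ s₂ : ℤ}

lemma eT_expand (p : IdxT A B) : 2 * eT σ r₁ s₁ r₂ s₂ p
    = 2 * σ + (∑ i, 2 * eFun r₁ s₁ (p.1.2 i)) + ∑ j, 2 * eFun r₂ s₂ (p.2 j) := by
  simp only [eT, ← Finset.mul_sum]
  ring

lemma eT_phi (hM0 : M ≠ 0) (hA : (A : ℤ) = a) (hB : (B : ℤ) = b) (hMab : M = 2 * a + b)
    (hr₁ : r₁ = b * k) (hs₁ : s₁ = μ * M - b * k) (hr₂ : r₂ = 2 * a * k)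
    (hs₂ : s₂ = 2 * μ * M - 2 * a * k)
    (p : IdxT A B) (hg : M ∣ (3 * a - 2 * dval p)) :
    eT σ r₁ s₁ r₂ s₂ (phiv M a p) = eT σ r₁ s₁ r₂ s₂ p := by
  have hceq := cc_spec hM0 p hg
  simp only [dval] at hceq
  set c := ccv M a p with hc
  have key : 2 * eT σ r₁ s₁ r₂ s₂ (phiv M a p) = 2 * eT σ r₁ s₁ r₂ s₂ p := by
    rw [eT_expand, eT_expand, phiv_of_good p hg]
    dsimp only
    simp only [sub_eq_add_neg]
    rw [sum_eFun_shift r₁ s₁ (2 * c) p.1.2, sum_eFun_shift r₂ s₂ (-c) p.2]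
    rw [hr₁, hs₁, hr₂, hs₂, hA, hB]
    linear_combination (-2 * μ * M * c) * hceq + (-2 * μ * M * c * (c + 1)) * hMab
  linarith

lemma good_of_sol (hcop : IsCoprime M (2 * a * k))
    (hA : (A : ℤ) = a) (hB : (B : ℤ) = b) (hMab : M = 2 * a + b)
    (hr₁ : r₁ = b * k) (hs₁ : s₁ = μ * M - b * k) (hr₂ : r₂ = 2 * a * k)
    (hs₂ : s₂ = 2 * μ * M - 2 * a * k) (hσ : σ = 3 * a ^ 2 * k)
    (p : IdxT A B) (N : ℤ) (hE : eT σ r₁ s₁ r₂ s₂ p = N) (hN : M ∣ N) :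
    M ∣ (3 * a - 2 * dval p) := by
  have e1 := sum_two_eFun r₁ s₁ p.1.2
  have e2 := sum_two_eFun r₂ s₂ p.2
  have hexp := eT_expand (σ := σ) (r₁ := r₁) (s₁ := s₁) (r₂ := r₂) (s₂ := s₂) p
  have hkey : 2 * N = 2 * a * k * (3 * a - 2 * dval p)
      + M * (2 * k * (∑ i, p.1.2 i) + μ * ((∑ i, (p.1.2 i) ^ 2) - ∑ i, p.1.2 i)
        + 2 * μ * ((∑ j, (p.2 j) ^ 2) - ∑ j, p.2 j)) := by
    simp only [dval]
    linear_combination -2 * hE + hexp + e1 + e2 + 2 * hσ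
      + (-2 * k * (∑ i, p.1.2 i)) * hMab
      + ((∑ i, (p.1.2 i) ^ 2) + ∑ i, p.1.2 i) * hr₁ + ((∑ i, (p.1.2 i) ^ 2) - ∑ i, p.1.2 i) * hs₁
      + ((∑ j, (p.2 j) ^ 2) + ∑ j, p.2 j) * hr₂ + ((∑ j, (p.2 j) ^ 2) - ∑ j, p.2 j) * hs₂
  have hdvd : M ∣ 2 * a * k * (3 * a - 2 * dval p) := by
    have h2 : M ∣ M * (2 * k * (∑ i, p.1.2 i) + μ * ((∑ i, (p.1.2 i) ^ 2) - ∑ i, p.1.2 i)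
        + 2 * μ * ((∑ j, (p.2 j) ^ 2) - ∑ j, p.2 j)) := dvd_mul_right _ _
    have h3 : 2 * a * k * (3 * a - 2 * dval p) = 2 * N - M * (2 * k * (∑ i, p.1.2 i)
        + μ * ((∑ i, (p.1.2 i) ^ 2) - ∑ i, p.1.2 i)
        + 2 * μ * ((∑ j, (p.2 j) ^ 2) - ∑ j, p.2 j)) := by linarith
    rw [h3]
    exact dvd_sub (hN.mul_left 2) h2
  exact hcop.dvd_of_dvd_mul_left hdvd

lemma cT_phi (ε₁ ε₂ : ℚ) (hε₁ : ε₁ = 1 ∨ ε₁ = -1) (hε₂ : ε₂ = -1) (hBodd : Odd B)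
    (p : IdxT A B) (hg : M ∣ (3 * a - 2 * dval p)) (hcodd : Odd (ccv M a p)) :
    cT ε₁ ε₂ (phiv M a p) = - cT ε₁ ε₂ p := by
  rw [phiv_of_good p hg, cT, cT]
  dsimp only
  set c := ccv M a p with hc
  have h1 : ∀ i : Fin A, ε₁ ^ (p.1.2 i + 2 * c) = ε₁ ^ (p.1.2 i) := by
    intro i
    rcases hε₁ with h | h <;> subst h
    · rw [one_zpow, one_zpow]
    · have hev : Even (2 * c) := ⟨c, two_mul c⟩
      rw [zpow_add₀ (by norm_num : (-1 : ℚ) ≠ 0), hev.neg_one_zpow, mul_one]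
  have h2 : ∀ j : Fin B, ε₂ ^ (p.2 j - c) = (-1) * ε₂ ^ (p.2 j) := by
    intro j
    subst hε₂
    rw [sub_eq_add_neg, zpow_add₀ (by norm_num : (-1 : ℚ) ≠ 0), Odd.neg_one_zpow hcodd.neg]
    ring
  rw [Finset.prod_congr rfl fun i _ => h1 i, Finset.prod_congr rfl fun j _ => h2 j,
    Finset.prod_mul_distrib, Finset.prod_const, Finset.card_univ, Fintype.card_fin,
    Odd.neg_one_pow hBodd]
  ring

end ECT

theorem theta_SRep (ε r s : ℤ) (h : 0 < r + s) :
    SRep (-(r - s) ^ 2) (eFun r s) (fun n : ℤ => (ε : ℚ) ^ n) (theta ε r s) where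
  hcoeff N := by
    simp only [theta, dif_pos h]
    rfl
  hlb := eFun_lb r s h
  hfin := eFun_fiber r s h

/-- **Theorem (Type II, eq. (1.14))**: with `gcd(2ℓ+2, 2m+1) = 1`,
`M = 4ℓ + 2m + 5` and `σ = 3(2ℓ+2)²k`, for `(κ, λ) ∈ {(0,1), (1,1)}`
and `gcd(k, M) = 1`,
`H_M(q^σ · f((-1)^κ q^{(2m+1)k}, (-1)^κ q^{μM-(2m+1)k})^{2ℓ+2} ·
  f((-1)^λ q^{(4ℓ+4)k}, (-1)^λ q^{2μM-(4ℓ+4)k})^{2m+1}) = 0`. -/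
theorem statement10 (μ ℓ m k M σ : ℤ) (hμ : 1 ≤ μ) (hℓ : 0 ≤ ℓ) (hm : 0 ≤ m)
    (hcop : Int.gcd (2 * ℓ + 2) (2 * m + 1) = 1)
    (hM : M = 4 * ℓ + 2 * m + 5) (hσ : σ = 3 * (2 * ℓ + 2) ^ 2 * k)
    (κ lam : ℕ) (hκlam : (κ = 0 ∧ lam = 1) ∨ (κ = 1 ∧ lam = 1))
    (hk : Int.gcd k M = 1) :
    huff M (HahnSeries.single σ (1 : ℚ)
      * theta ((-1) ^ κ) ((2 * m + 1) * k) (μ * M - (2 * m + 1) * k) ^ (2 * ℓ + 2)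
      * theta ((-1) ^ lam) ((4 * ℓ + 4) * k)
          (2 * μ * M - (4 * ℓ + 4) * k) ^ (2 * m + 1)) = 0 := by
  have hlam : lam = 1 := by rcases hκlam with ⟨_, h⟩ | ⟨_, h⟩ <;> exact h
  subst hlam
  have hM5 : (0 : ℤ) < M := by omega
  have hM0 : M ≠ 0 := hM5.ne'
  have hμM : (0 : ℤ) < μ * M := mul_pos (by omega) hM5
  have h₁ : (0 : ℤ) < (2 * m + 1) * k + (μ * M - (2 * m + 1) * k) := by linarith
  have h₂ : (0 : ℤ) < (4 * ℓ + 4) * k + (2 * μ * M - (4 * ℓ + 4) * k) := by linarith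
  set A := (2 * ℓ + 2).toNat with hAdef
  set B := (2 * m + 1).toNat with hBdef
  have hA : (A : ℤ) = 2 * ℓ + 2 := Int.toNat_of_nonneg (by omega)
  have hB : (B : ℤ) = 2 * m + 1 := Int.toNat_of_nonneg (by omega)
  have hzp1 : (2 * ℓ + 2 : ℤ) = ((A : ℕ) : ℤ) := hA.symm
  have hzp2 : (2 * m + 1 : ℤ) = ((B : ℕ) : ℤ) := hB.symm
  have hz1 : theta ((-1) ^ κ) ((2 * m + 1) * k) (μ * M - (2 * m + 1) * k) ^ (2 * ℓ + 2 : ℤ)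
      = theta ((-1) ^ κ) ((2 * m + 1) * k) (μ * M - (2 * m + 1) * k) ^ A := by
    rw [hzp1, zpow_natCast]
  have hz2 : theta ((-1) ^ 1) ((4 * ℓ + 4) * k) (2 * μ * M - (4 * ℓ + 4) * k) ^ (2 * m + 1 : ℤ)
      = theta ((-1) ^ 1) ((4 * ℓ + 4) * k) (2 * μ * M - (4 * ℓ + 4) * k) ^ B := by
    rw [hzp2, zpow_natCast]
  rw [hz1, hz2]
  -- representation of the product
  have R1 := (theta_SRep ((-1) ^ κ) ((2 * m + 1) * k) (μ * M - (2 * m + 1) * k) h₁).pow A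
  have R2 := (theta_SRep ((-1) ^ 1) ((4 * ℓ + 4) * k) (2 * μ * M - (4 * ℓ + 4) * k) h₂).pow B
  have Rt := (SRep.single σ |>.mul R1).mul R2
  set ε₁ : ℚ := (((-1 : ℤ) ^ κ : ℤ) : ℚ) with hε₁def
  set ε₂ : ℚ := (((-1 : ℤ) ^ 1 : ℤ) : ℚ) with hε₂def
  set r₁ : ℤ := (2 * m + 1) * k
  set s₁ : ℤ := μ * M - (2 * m + 1) * k
  set r₂ : ℤ := (4 * ℓ + 4) * k
  set s₂ : ℤ := 2 * μ * M - (4 * ℓ + 4) * k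
  have Rt' := Rt.congr_fun (e' := eT σ r₁ s₁ r₂ s₂) (c' := cT ε₁ ε₂)
    (fun p => rfl) (fun p => rfl)
  -- facts
  have hε₁ : ε₁ = 1 ∨ ε₁ = -1 := by
    rcases Nat.even_or_odd κ with h | h
    · left; rw [hε₁def, h.neg_one_pow]; norm_num
    · right; rw [hε₁def, h.neg_one_pow]; norm_num
  have hε₂ : ε₂ = -1 := by rw [hε₂def]; norm_num
  have hMab : M = 2 * (2 * ℓ + 2) + (2 * m + 1) := by omega
  have hr₁ : r₁ = (2 * m + 1) * k := rfl
  have hs₁ : s₁ = μ * M - (2 * m + 1) * k := rfl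
  have hr₂ : r₂ = 2 * (2 * ℓ + 2) * k := by simp only [r₂]; ring
  have hs₂ : s₂ = 2 * μ * M - 2 * (2 * ℓ + 2) * k := by simp only [s₂]; ring
  have hσ' : σ = 3 * (2 * ℓ + 2) ^ 2 * k := hσ
  have hcop2ak : IsCoprime M (2 * (2 * ℓ + 2) * k) := by
    have hab : IsCoprime (2 * ℓ + 2 : ℤ) (2 * m + 1) := Int.isCoprime_iff_gcd_eq_one.mpr hcop
    have haM : IsCoprime (2 * ℓ + 2 : ℤ) M := by
      have hM' : M = (2 * m + 1) + (2 * ℓ + 2) * 2 := by omega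
      rw [hM']
      exact hab.add_mul_left_right 2
    have h2M : IsCoprime (2 : ℤ) M := ⟨-(2 * ℓ + m + 2), 1, by omega⟩
    have hkM : IsCoprime k M := Int.isCoprime_iff_gcd_eq_one.mpr hk
    have := h2M.symm.mul_right (haM.symm.mul_right hkM.symm)
    rwa [show (2 : ℤ) * ((2 * ℓ + 2) * k) = 2 * (2 * ℓ + 2) * k by ring] at this
  have hOddM : Odd M := ⟨2 * ℓ + m + 2, by omega⟩
  have hccodd : ∀ p : IdxT A B, M ∣ (3 * (2 * ℓ + 2) - 2 * dval p) →
      Odd (ccv M (2 * ℓ + 2) p) := by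
    intro p hg
    have hceq := cc_spec hM0 p hg
    have he : Even (3 * (2 * ℓ + 2) - 2 * dval p) := ⟨3 * ℓ + 3 - dval p, by ring⟩
    rw [hceq] at he
    rcases Int.even_mul.mp he with h | h
    · exact absurd hOddM (Int.not_odd_iff_even.mpr h)
    · obtain ⟨t, ht⟩ := h
      exact ⟨t - 1, by omega⟩
  have hA0 : 0 < A := by
    have : (0 : ℤ) < (A : ℤ) := by rw [hA]; omega
    exact_mod_cast this
  have hBodd : Odd B := by
    rw [← Int.odd_coe_nat, hB]
    exact ⟨m, by ring⟩
  -- final computation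
  ext N
  have hcoeff : (huff M (HahnSeries.single σ (1 : ℚ) * theta ((-1) ^ κ) r₁ s₁ ^ A
      * theta ((-1) ^ 1) r₂ s₂ ^ B)).coeff N
      = if M ∣ N then (HahnSeries.single σ (1 : ℚ) * theta ((-1) ^ κ) r₁ s₁ ^ A
      * theta ((-1) ^ 1) r₂ s₂ ^ B).coeff N else 0 := rfl
  rw [HahnSeries.coeff_zero, hcoeff]
  by_cases hdvd : M ∣ N
  · rw [if_pos hdvd, Rt'.coeff_eq_sum N]
    refine Finset.sum_involution (fun p _ => phiv M (2 * ℓ + 2) p) ?_ ?_ ?_ ?_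
    · -- f a + f (g a) = 0
      intro p hp
      rw [Set.Finite.mem_toFinset, Set.mem_setOf_eq] at hp
      have hg := good_of_sol hcop2ak hA hB hMab hr₁ hs₁ hr₂ hs₂ hσ' p N hp hdvd
      rw [cT_phi (M := M) (a := 2 * ℓ + 2) ε₁ ε₂ hε₁ hε₂ hBodd p hg (hccodd p hg)]
      ring
    · -- g a ≠ a
      intro p hp _
      rw [Set.Finite.mem_toFinset, Set.mem_setOf_eq] at hp
      have hg := good_of_sol hcop2ak hA hB hMab hr₁ hs₁ hr₂ hs₂ hσ' p N hp hdvd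
      have hcne : ccv M (2 * ℓ + 2) p ≠ 0 := by
        obtain ⟨t, ht⟩ := hccodd p hg
        omega
      exact phi_ne p hA0 hg hcne
    · -- g a ∈ s
      intro p hp
      rw [Set.Finite.mem_toFinset, Set.mem_setOf_eq] at hp ⊢
      have hg := good_of_sol hcop2ak hA hB hMab hr₁ hs₁ hr₂ hs₂ hσ' p N hp hdvd
      rw [eT_phi hM0 hA hB hMab hr₁ hs₁ hr₂ hs₂ p hg]
      exact hp
    · -- involutive
      intro p hp
      exact phi_invol hM0 hA hB hMab p
  · rw [if_neg hdvd]


end ThetaVanish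
end
end

section
/- Let M be a positive integer and u, v integers. Set d* = gcd(u, v, M), d_u = gcd(u, M), d_v = gcd(v, M), u' = u/d_u, v' = v/d_v. Then d_u·d_v divides d*·M; set D = d*·M/(d_u·d_v). Suppose a₁, b₁, a₂, b₂ are integers with gcd(a₁, b₁) = 1 and gcd(a₂, b₂) = 1 such that D divides u'·a₁ + v'·a₂, D divides u'·b₁ + v'·b₂, and a₁·b₂ − a₂·b₁ = D or a₁·b₂ − a₂·b₁ = −D. Then { (m, n) ∈ ℤ² : M divides u·m + v·n } = { ( (d_v/d*)·(a₁·s + b₁·t), (d_u/d*)·(a₂·s + b₂·t) ) : s, t ∈ ℤ }. -/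
private lemma natgcdkey (a b m : ℕ) :
    Nat.gcd (Nat.gcd a m) (Nat.gcd b m) = Nat.gcd (Nat.gcd a b) m := by
  rw [Nat.gcd_assoc, Nat.gcd_comm m, Nat.gcd_assoc, Nat.gcd_self, ← Nat.gcd_assoc]

/-- **Lemma (solution set of a homogeneous linear congruence as a sublattice of ℤ²)**:
with `d* = gcd(u, v, M)`, `d_u = gcd(u, M)`, `d_v = gcd(v, M)`, `u' = u/d_u`,
`v' = v/d_v`, one has `d_u·d_v ∣ d*·M`; and if `a₁, b₁, a₂, b₂` are integers with
`gcd(a₁, b₁) = gcd(a₂, b₂) = 1`, `D ∣ u'a₁ + v'a₂`, `D ∣ u'b₁ + v'b₂` and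
`a₁b₂ - a₂b₁ = ±D`, where `D = d*·M/(d_u·d_v)`, then
`{(m, n) : M ∣ um + vn} = {((d_v/d*)(a₁s + b₁t), (d_u/d*)(a₂s + b₂t)) : s, t ∈ ℤ}`. -/
theorem statement13 (M u v : ℤ) (hM : 0 < M)
    (dstar du dv u' v' D : ℤ)
    (hdstar : dstar = (Int.gcd (Int.gcd u v : ℤ) M : ℤ))
    (hdu : du = (Int.gcd u M : ℤ)) (hdv : dv = (Int.gcd v M : ℤ))
    (hu' : u' = u / du) (hv' : v' = v / dv)
    (hD : D = dstar * M / (du * dv))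
    (a₁ b₁ a₂ b₂ : ℤ) (hab₁ : Int.gcd a₁ b₁ = 1) (hab₂ : Int.gcd a₂ b₂ = 1)
    (ha : D ∣ u' * a₁ + v' * a₂) (hb : D ∣ u' * b₁ + v' * b₂)
    (hdet : a₁ * b₂ - a₂ * b₁ = D ∨ a₁ * b₂ - a₂ * b₁ = -D) :
    du * dv ∣ dstar * M ∧
      {p : ℤ × ℤ | M ∣ u * p.1 + v * p.2} =
        {p : ℤ × ℤ | ∃ s t : ℤ,
          p = ((dv / dstar) * (a₁ * s + b₁ * t), (du / dstar) * (a₂ * s + b₂ * t))} := by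
  have hMne : M ≠ 0 := hM.ne'
  -- positivity
  have hdu_pos : 0 < du := by
    rw [hdu]; exact_mod_cast Int.gcd_pos_iff.mpr (Or.inr hMne)
  have hdv_pos : 0 < dv := by
    rw [hdv]; exact_mod_cast Int.gcd_pos_iff.mpr (Or.inr hMne)
  have hds_pos : 0 < dstar := by
    rw [hdstar]; exact_mod_cast Int.gcd_pos_iff.mpr (Or.inr hMne)
  have hds_ne : dstar ≠ 0 := hds_pos.ne'
  have hdu_ne : du ≠ 0 := hdu_pos.ne'
  have hdv_ne : dv ≠ 0 := hdv_pos.ne'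
  -- basic divisibilities
  have hdu_u : du ∣ u := hdu ▸ (Int.gcd_dvd_left _ _)
  have hdu_M : du ∣ M := hdu ▸ (Int.gcd_dvd_right _ _)
  have hdv_v : dv ∣ v := hdv ▸ (Int.gcd_dvd_left _ _)
  have hdv_M : dv ∣ M := hdv ▸ (Int.gcd_dvd_right _ _)
  have hds_u : dstar ∣ u := hdstar ▸ dvd_trans (Int.gcd_dvd_left _ _) (Int.gcd_dvd_left _ _)
  have hds_v : dstar ∣ v := hdstar ▸ dvd_trans (Int.gcd_dvd_left _ _) (Int.gcd_dvd_right _ _)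
  have hds_M : dstar ∣ M := hdstar ▸ (Int.gcd_dvd_right _ _)
  have hds_du : dstar ∣ du := hdu ▸ Int.dvd_coe_gcd hds_u hds_M
  have hds_dv : dstar ∣ dv := hdv ▸ Int.dvd_coe_gcd hds_v hds_M
  -- exact quotients
  set c := du / dstar with hcdef
  set e := dv / dstar with hedef
  have hc : du = dstar * c := (Int.mul_ediv_cancel' hds_du).symm
  have he : dv = dstar * e := (Int.mul_ediv_cancel' hds_dv).symm
  have hu : u = du * u' := by rw [hu']; exact (Int.mul_ediv_cancel' hdu_u).symm
  have hv : v = dv * v' := by rw [hv']; exact (Int.mul_ediv_cancel' hdv_v).symm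
  have hc_ne : c ≠ 0 := fun h => hdu_ne (by rw [hc, h, mul_zero])
  have he_ne : e ≠ 0 := fun h => hdv_ne (by rw [he, h, mul_zero])
  -- gcd identities
  have hg_u_dv : (Int.gcd u dv : ℤ) = dstar := by
    rw [hdv, hdstar]
    norm_cast
    simp only [Int.gcd, Int.natAbs_natCast]
    exact (Nat.gcd_assoc _ _ _).symm
  have hg_v_du : (Int.gcd v du : ℤ) = dstar := by
    rw [hdu, hdstar]
    norm_cast
    simp only [Int.gcd, Int.natAbs_natCast]
    rw [← Nat.gcd_assoc, Nat.gcd_comm v.natAbs]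
  have hg_du_dv : (Int.gcd du dv : ℤ) = dstar := by
    rw [hdu, hdv, hdstar]
    norm_cast
    simp only [Int.gcd, Int.natAbs_natCast]
    exact natgcdkey _ _ _
  -- dstar-level coprimalities
  have hds_nat : (dstar.natAbs : ℤ) = dstar := Int.natAbs_of_nonneg hds_pos.le
  have key_cop : ∀ x y : ℤ, dstar * x = u ∨ dstar * x = v ∨ dstar * x = du →
      dstar * y = du ∨ dstar * y = dv → (Int.gcd (dstar * x) (dstar * y) : ℤ) = dstar →
      IsCoprime x y := by
    intro x y _ _ hg
    rw [Int.gcd_mul_left] at hg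
    apply Int.isCoprime_iff_gcd_eq_one.mpr
    have : (dstar.natAbs : ℤ) * (Int.gcd x y : ℤ) = dstar * 1 := by
      push_cast at hg ⊢; rw [hg]; ring
    rw [hds_nat] at this
    exact_mod_cast mul_left_cancel₀ hds_ne this
  have hu₀ : u = dstar * (u / dstar) := (Int.mul_ediv_cancel' hds_u).symm
  have hv₀ : v = dstar * (v / dstar) := (Int.mul_ediv_cancel' hds_v).symm
  set u₀ := u / dstar
  set v₀ := v / dstar
  have cop_u₀_e : IsCoprime u₀ e :=
    key_cop u₀ e (Or.inl hu₀.symm) (Or.inr he.symm) (by rw [← hu₀, ← he, hg_u_dv])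
  have cop_v₀_c : IsCoprime v₀ c :=
    key_cop v₀ c (Or.inr (Or.inl hv₀.symm)) (Or.inl hc.symm) (by rw [← hv₀, ← hc, hg_v_du])
  have cop_c_e : IsCoprime c e :=
    key_cop c e (Or.inr (Or.inr hc.symm)) (Or.inr he.symm) (by rw [← hc, ← he, hg_du_dv])
  -- Part 1: du * dv ∣ dstar * M
  have hM' : M = dstar * (M / dstar) := (Int.mul_ediv_cancel' hds_M).symm
  set M₀ := M / dstar
  have hc_M₀ : c ∣ M₀ := by
    have : dstar * c ∣ dstar * M₀ := by rw [← hc, ← hM']; exact hdu_M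
    exact (mul_dvd_mul_iff_left hds_ne).mp this
  have he_M₀ : e ∣ M₀ := by
    have : dstar * e ∣ dstar * M₀ := by rw [← he, ← hM']; exact hdv_M
    exact (mul_dvd_mul_iff_left hds_ne).mp this
  have hce_M₀ : c * e ∣ M₀ := cop_c_e.mul_dvd hc_M₀ he_M₀
  have part1 : du * dv ∣ dstar * M := by
    obtain ⟨k, hk⟩ := hce_M₀
    exact ⟨k, by rw [hc, he, hM', hk]; ring⟩
  refine ⟨part1, ?_⟩
  -- D basic facts
  have hDmul : D * (du * dv) = dstar * M := by
    rw [hD]; exact Int.ediv_mul_cancel part1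
  have hMeq : M = du * D * e := by
    have h2 : dstar * (du * D * e) = dstar * M := by rw [← hDmul, he]; ring
    exact (mul_left_cancel₀ hds_ne h2).symm
  have hD_pos : 0 < D := by
    rcases lt_trichotomy D 0 with h | h | h
    · nlinarith [mul_pos hdu_pos hdv_pos, mul_pos hds_pos hM]
    · rw [h] at hDmul; nlinarith [mul_pos hds_pos hM]
    · exact h
  have hD_ne : D ≠ 0 := hD_pos.ne'
  -- coprimality of gcd(u', v') with D
  have hDdu_M : du * D ∣ M := ⟨e, hMeq⟩
  have cop_g_D : IsCoprime (Int.gcd u' v' : ℤ) D := by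
    set g : ℤ := (Int.gcd u' v' : ℤ) with hgdef
    set G : ℤ := (Int.gcd g D : ℤ) with hGdef
    have hG_g : G ∣ g := (Int.gcd_dvd_left _ _)
    have hG_D : G ∣ D := (Int.gcd_dvd_right _ _)
    have hG_u' : G ∣ u' := hG_g.trans (Int.gcd_dvd_left _ _)
    have h1 : G * du ∣ u := by
      obtain ⟨k, hk⟩ := hG_u'
      exact ⟨k, by rw [hu, hk]; ring⟩
    have h2 : G * du ∣ M := by
      refine dvd_trans ?_ hDdu_M
      exact mul_dvd_mul_right hG_D du |>.trans (by rw [mul_comm])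
    have h3 : G * du ∣ (Int.gcd u M : ℤ) := Int.dvd_coe_gcd h1 h2
    rw [← hdu] at h3
    have h3' : G * du ∣ 1 * du := by rw [one_mul]; exact h3
    have h4 : G ∣ 1 := (mul_dvd_mul_iff_right hdu_ne).mp h3'
    have h5 : Int.gcd g D = 1 := by
      have h6 := Int.eq_one_of_dvd_one (by positivity) h4
      rw [hGdef] at h6
      exact_mod_cast h6
    exact Int.isCoprime_iff_gcd_eq_one.mpr h5
  -- the set equality
  ext p
  simp only [Set.mem_setOf_eq]
  obtain ⟨m, n⟩ := p
  dsimp only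
  obtain ⟨ka, hka⟩ := ha
  obtain ⟨kb, hkb⟩ := hb
  constructor
  · -- forward inclusion
    intro hmem
    -- e ∣ m
    have hdv_um : dv ∣ u * m := by
      have h1 : dv ∣ u * m + v * n := hdv_M.trans hmem
      have h2 : dv ∣ v * n := Dvd.dvd.mul_right hdv_v n
      simpa using dvd_sub h1 h2
    have he_u₀m : e ∣ u₀ * m := by
      have h1 : dstar * e ∣ dstar * (u₀ * m) := by
        rw [← he, ← mul_assoc, ← hu₀]; exact hdv_um
      exact (mul_dvd_mul_iff_left hds_ne).mp h1
    have he_m : e ∣ m := cop_u₀_e.symm.dvd_of_dvd_mul_left he_u₀m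
    -- c ∣ n
    have hdu_vn : du ∣ v * n := by
      have h1 : du ∣ u * m + v * n := hdu_M.trans hmem
      have h2 : du ∣ u * m := Dvd.dvd.mul_right hdu_u m
      simpa using dvd_sub h1 h2
    have hc_v₀n : c ∣ v₀ * n := by
      have h1 : dstar * c ∣ dstar * (v₀ * n) := by
        rw [← hc, ← mul_assoc, ← hv₀]; exact hdu_vn
      exact (mul_dvd_mul_iff_left hds_ne).mp h1
    have hc_n : c ∣ n := cop_v₀_c.symm.dvd_of_dvd_mul_left hc_v₀n
    obtain ⟨m₁, hm₁⟩ := he_m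
    obtain ⟨n₁, hn₁⟩ := hc_n
    -- D ∣ u' * m₁ + v' * n₁
    have hce_ne : dstar * c * e ≠ 0 := mul_ne_zero (mul_ne_zero hds_ne hc_ne) he_ne
    have hsum : u * m + v * n = (dstar * c * e) * (u' * m₁ + v' * n₁) := by
      rw [hu, hv, hm₁, hn₁, hc, he]; ring
    have hMeq2 : M = (dstar * c * e) * D := by rw [hMeq, hc]; ring
    have hDw : D ∣ u' * m₁ + v' * n₁ := by
      have h1 : (dstar * c * e) * D ∣ (dstar * c * e) * (u' * m₁ + v' * n₁) := by
        rw [← hsum, ← hMeq2]; exact hmem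
      exact (mul_dvd_mul_iff_left hce_ne).mp h1
    obtain ⟨kw, hkw⟩ := hDw
    -- D divides the Cramer numerators
    have divkey : ∀ x : ℤ, D ∣ u' * x → D ∣ v' * x → D ∣ x := by
      intro x h1 h2
      have h3 : D ∣ (Int.gcd (u' * x) (v' * x) : ℤ) := Int.dvd_coe_gcd h1 h2
      rw [Int.gcd_mul_right] at h3
      push_cast at h3
      have h4 : D ∣ |x| := cop_g_D.symm.dvd_of_dvd_mul_left h3
      exact (dvd_abs D x).mp h4
    have hx_u : D ∣ u' * (b₂ * m₁ - b₁ * n₁) :=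
      ⟨b₂ * kw - n₁ * kb, by linear_combination b₂ * hkw - n₁ * hkb⟩
    have hx_v : D ∣ v' * (b₂ * m₁ - b₁ * n₁) :=
      ⟨m₁ * kb - b₁ * kw, by linear_combination m₁ * hkb - b₁ * hkw⟩
    have hy_u : D ∣ u' * (a₁ * n₁ - a₂ * m₁) :=
      ⟨n₁ * ka - a₂ * kw, by linear_combination n₁ * hka - a₂ * hkw⟩
    have hy_v : D ∣ v' * (a₁ * n₁ - a₂ * m₁) :=
      ⟨a₁ * kw - m₁ * ka, by linear_combination a₁ * hkw - m₁ * hka⟩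
    obtain ⟨x₀, hx₀⟩ := divkey _ hx_u hx_v
    obtain ⟨y₀, hy₀⟩ := divkey _ hy_u hy_v
    rcases hdet with hΔ | hΔ
    · refine ⟨x₀, y₀, ?_⟩
      have hm : m₁ = a₁ * x₀ + b₁ * y₀ := by
        apply mul_left_cancel₀ hD_ne
        linear_combination a₁ * hx₀ + b₁ * hy₀ - m₁ * hΔ
      have hn : n₁ = a₂ * x₀ + b₂ * y₀ := by
        apply mul_left_cancel₀ hD_ne
        linear_combination a₂ * hx₀ + b₂ * hy₀ - n₁ * hΔ
      simp only [Prod.mk.injEq]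
      exact ⟨by rw [hm₁, hm], by rw [hn₁, hn]⟩
    · refine ⟨-x₀, -y₀, ?_⟩
      have hm : m₁ = a₁ * (-x₀) + b₁ * (-y₀) := by
        apply mul_left_cancel₀ hD_ne
        linear_combination -(a₁ * hx₀) - b₁ * hy₀ + m₁ * hΔ
      have hn : n₁ = a₂ * (-x₀) + b₂ * (-y₀) := by
        apply mul_left_cancel₀ hD_ne
        linear_combination -(a₂ * hx₀) - b₂ * hy₀ + n₁ * hΔ
      simp only [Prod.mk.injEq]
      exact ⟨by rw [hm₁, hm], by rw [hn₁, hn]⟩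
  · -- reverse inclusion
    rintro ⟨s, t, hp⟩
    rw [Prod.mk.injEq] at hp
    obtain ⟨hp1, hp2⟩ := hp
    rw [hp1, hp2]
    refine ⟨s * ka + t * kb, ?_⟩
    have expand : u * (e * (a₁ * s + b₁ * t)) + v * (c * (a₂ * s + b₂ * t)) =
        (dstar * c * e) * (s * (u' * a₁ + v' * a₂) + t * (u' * b₁ + v' * b₂)) := by
      rw [hu, hv, hc, he]; ring
    rw [expand, hka, hkb, hMeq, hc]
    ring
end

section
/- Let M be a positive integer and u, v, w integers with (u, v) ≠ (0, 0). Set d* = gcd(u, v, M), d = gcd(u, v), d_u = gcd(u, M), d_v = gcd(v, M), and assume d* divides w. Let (m₀, n₀) be a pair of integers such that M divides u·m₀ + v·n₀ + w, and let (α, β) be a pair of integers such that u·d_v·α + v·d_u·β = d·M. Then { (m, n) ∈ ℤ² : M divides u·m + v·n + w } = { ( α·s·(d_v/d*) − (v/d)·t + m₀, β·s·(d_u/d*) + (u/d)·t + n₀ ) : s, t ∈ ℤ }. -/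
/-- **Theorem (solution set of an inhomogeneous linear congruence)**: with
`d* = gcd(u, v, M)`, `d = gcd(u, v)`, `d_u = gcd(u, M)`, `d_v = gcd(v, M)`,
`d* ∣ w`, a particular solution `(m₀, n₀)` of `u·m₀ + v·n₀ + w ≡ 0 (mod M)`,
and `(α, β)` a solution of `u·d_v·x + v·d_u·y = d·M`, the solution set of
`u·m + v·n + w ≡ 0 (mod M)` is
`{(α·s·(d_v/d*) - (v/d)·t + m₀, β·s·(d_u/d*) + (u/d)·t + n₀) : s, t ∈ ℤ}`. -/
theorem statement15 (M u v w : ℤ) (hM : 0 < M) (huv : (u, v) ≠ (0, 0))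
    (dstar d du dv : ℤ)
    (hdstar : dstar = (Int.gcd (Int.gcd u v : ℤ) M : ℤ))
    (hd : d = (Int.gcd u v : ℤ))
    (hdu : du = (Int.gcd u M : ℤ)) (hdv : dv = (Int.gcd v M : ℤ))
    (hw : dstar ∣ w)
    (m₀ n₀ : ℤ) (h₀ : M ∣ u * m₀ + v * n₀ + w)
    (α β : ℤ) (hαβ : u * dv * α + v * du * β = d * M) :
    {p : ℤ × ℤ | M ∣ u * p.1 + v * p.2 + w} =
      {p : ℤ × ℤ | ∃ s t : ℤ,
        p = (α * s * (dv / dstar) - (v / d) * t + m₀,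
             β * s * (du / dstar) + (u / d) * t + n₀)} := by
  -- basic nonvanishing facts
  have huv' : u ≠ 0 ∨ v ≠ 0 := by
    by_contra hcon
    push_neg at hcon
    exact huv (by simp [hcon.1, hcon.2])
  have hgcd_pos : 0 < Int.gcd u v := Int.gcd_pos_iff.mpr huv'
  have hd0 : d ≠ 0 := by rw [hd]; exact_mod_cast hgcd_pos.ne'
  rw [← hd] at hdstar
  have hgcddM_pos : 0 < Int.gcd d M := Int.gcd_pos_iff.mpr (Or.inl hd0)
  have hdstar0 : dstar ≠ 0 := by rw [hdstar]; exact_mod_cast hgcddM_pos.ne'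
  -- divisibilities
  have hdu' : d ∣ u := by rw [hd]; exact Int.gcd_dvd_left _ _
  have hdv' : d ∣ v := by rw [hd]; exact Int.gcd_dvd_right _ _
  have hsd : dstar ∣ d := by rw [hdstar]; exact Int.gcd_dvd_left _ _
  have hsM : dstar ∣ M := by rw [hdstar]; exact Int.gcd_dvd_right _ _
  have hsdu : dstar ∣ du := by
    rw [hdu]; exact Int.dvd_coe_gcd (hsd.trans hdu') hsM
  have hsdv : dstar ∣ dv := by
    rw [hdv]; exact Int.dvd_coe_gcd (hsd.trans hdv') hsM
  -- exact quotients
  obtain ⟨u', hu'⟩ := hdu'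
  obtain ⟨v', hv'⟩ := hdv'
  obtain ⟨eu, heu⟩ := hsdu
  obtain ⟨ev, hev⟩ := hsdv
  obtain ⟨d', hd'⟩ := hsd
  obtain ⟨M', hM'⟩ := hsM
  -- coprimalities
  have cop_uv : IsCoprime u' v' := by
    rw [Int.isCoprime_iff_gcd_eq_one]
    have h1 : u / (Int.gcd u v : ℤ) = u' := by
      rw [← hd, hu']; exact Int.mul_ediv_cancel_left _ hd0
    have h2 : v / (Int.gcd u v : ℤ) = v' := by
      rw [← hd, hv']; exact Int.mul_ediv_cancel_left _ hd0
    rw [← h1, ← h2]; exact Int.gcd_div_gcd_div_gcd hgcd_pos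
  have cop_dM : IsCoprime d' M' := by
    rw [Int.isCoprime_iff_gcd_eq_one]
    have h1 : d / (Int.gcd d M : ℤ) = d' := by
      rw [← hdstar, hd']; exact Int.mul_ediv_cancel_left _ hdstar0
    have h2 : M / (Int.gcd d M : ℤ) = M' := by
      rw [← hdstar, hM']; exact Int.mul_ediv_cancel_left _ hdstar0
    rw [← h1, ← h2]; exact Int.gcd_div_gcd_div_gcd hgcddM_pos
  -- division rewrites
  have div1 : dv / dstar = ev := by rw [hev]; exact Int.mul_ediv_cancel_left _ hdstar0
  have div2 : du / dstar = eu := by rw [heu]; exact Int.mul_ediv_cancel_left _ hdstar0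
  have div3 : v / d = v' := by rw [hv']; exact Int.mul_ediv_cancel_left _ hd0
  have div4 : u / d = u' := by rw [hu']; exact Int.mul_ediv_cancel_left _ hd0
  -- key identity
  have key : u' * ev * α + v' * eu * β = M' := by
    have hdd0 : d * dstar ≠ 0 := mul_ne_zero hd0 hdstar0
    apply mul_left_cancel₀ hdd0
    calc d * dstar * (u' * ev * α + v' * eu * β)
        = u * dv * α + v * du * β := by rw [hu', hv', heu, hev]; ring
      _ = d * M := hαβ
      _ = d * dstar * M' := by rw [hM']; ring
  obtain ⟨k, hk⟩ := h₀
  ext ⟨m, n⟩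
  simp only [Set.mem_setOf_eq, div1, div2, div3, div4, Prod.mk.injEq]
  constructor
  · rintro ⟨K, hK⟩
    -- subtract particular solution
    have h1 : d' * (u' * (m - m₀) + v' * (n - n₀)) = M' * (K - k) := by
      apply mul_left_cancel₀ hdstar0
      calc dstar * (d' * (u' * (m - m₀) + v' * (n - n₀)))
          = (u * m + v * n + w) - (u * m₀ + v * n₀ + w) := by
            rw [hu', hv', hd']; ring
        _ = M * K - M * k := by rw [hK, hk]
        _ = dstar * (M' * (K - k)) := by rw [hM']; ring
    have h2 : M' ∣ u' * (m - m₀) + v' * (n - n₀) :=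
      cop_dM.symm.dvd_of_dvd_mul_left ⟨K - k, h1⟩
    obtain ⟨s, hs⟩ := h2
    -- homogeneous part
    have hz : u' * (m - m₀ - s * (α * ev)) + v' * (n - n₀ - s * (β * eu)) = 0 := by
      linear_combination hs - s * key
    obtain ⟨x, y, hxy⟩ := cop_uv
    refine ⟨s, x * (n - n₀ - s * (β * eu)) - y * (m - m₀ - s * (α * ev)), ?_, ?_⟩
    · linear_combination x * hz - (m - m₀ - s * (α * ev)) * hxy
    · linear_combination y * hz - (n - n₀ - s * (β * eu)) * hxy
  · rintro ⟨s, t, hm, hn⟩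
    refine ⟨d' * s + k, ?_⟩
    calc u * m + v * n + w
        = d * s * (u' * ev * α + v' * eu * β) + (u * m₀ + v * n₀ + w) := by
          rw [hm, hn, hu', hv']; ring
      _ = d * s * M' + M * k := by rw [key, hk]
      _ = M * (d' * s + k) := by rw [hd', hM']; ring
end
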